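/- arXiv:math/0610662 — 8 statements merged into one kernel-verified Lean document; each statement's English description precedes it below -/
import Mathlib

section
/- Let $\Delta$ be a pure simplicial complex on $[n]$ with $\mathrm{core}\,\Delta = \Delta$, such that $K[\Delta]$ is a gCI and $I_\Delta$ has a 2-linear resolution. Then for any two distinct facets $F$ and $H$ of $\Delta$ with $F \cap H \neq \emptyset$, there exists a unique pair $\{i_1, i_2\}$ with $i_1 \in F \setminus H$, $i_2 \in H \setminus F$, and $\{i_1, i_2\}$ an edge of the edge graph $G_\Delta$ (i.e., $X_{i_1}X_{i_2} \in I_\Delta$). -/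
open Finset

variable {n : ℕ}

/-- A (finite abstract) simplicial complex on vertex set `Fin n`:
down-closed and containing every vertex. -/
def IsComplex (Δ : Finset (Finset (Fin n))) : Prop :=
  (∀ s ∈ Δ, ∀ t ⊆ s, t ∈ Δ) ∧ ∀ i : Fin n, {i} ∈ Δ

/-- `F` is a facet (maximal face) of `Δ`. -/
def IsFacet (Δ : Finset (Finset (Fin n))) (F : Finset (Fin n)) : Prop :=
  F ∈ Δ ∧ ∀ G ∈ Δ, F ⊆ G → F = G

/-- `Δ` is pure: all facets have the same cardinality. -/
def IsPure (Δ : Finset (Finset (Fin n))) : Prop :=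
  ∀ F G, IsFacet Δ F → IsFacet Δ G → F.card = G.card

/-- `core Δ = Δ`: every vertex `i` has some `j` with `{i,j} ∉ Δ`. -/
def FullCore (Δ : Finset (Finset (Fin n))) : Prop :=
  ∀ i : Fin n, ∃ j, j ≠ i ∧ ({i, j} : Finset (Fin n)) ∉ Δ

/-- The edge graph `G_Δ`: edges are the 2-element non-faces of `Δ`
(the supports of the degree-2 generators of the Stanley–Reisner ideal). -/
def edgeGraph (Δ : Finset (Finset (Fin n))) : SimpleGraph (Fin n) where
  Adj i j := i ≠ j ∧ ({i, j} : Finset (Fin n)) ∉ Δ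
  symm := by
    constructor
    intro i j h
    exact ⟨h.1.symm, by rw [Finset.pair_comm]; exact h.2⟩
  loopless := by constructor; intro i h; exact h.1 rfl

/-- `Δ` is the clique complex of its 1-skeleton, i.e. `I_Δ` is generated in degree 2. -/
def CliqueComplexProp (Δ : Finset (Finset (Fin n))) : Prop :=
  ∀ F : Finset (Fin n), F ∈ Δ ↔ ∀ i ∈ F, ∀ j ∈ F, i ≠ j → ({i, j} : Finset (Fin n)) ∈ Δ

/-- A minimal non-face of `Δ` (support of a minimal generator of `I_Δ`). -/
def MinNonFace (Δ : Finset (Finset (Fin n))) (F : Finset (Fin n)) : Prop :=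
  F ∉ Δ ∧ ∀ t ⊂ F, t ∈ Δ

/-- Condition (iv) of the Goto–Takayama characterization: every length-4 path
(5 pairwise distinct vertices, consecutive ones adjacent) admits a chord from
the first vertex to the third, fourth or fifth vertex. -/
def FourPathChord {V : Type*} (G : SimpleGraph V) : Prop :=
  ∀ i₁ i₂ i₃ i₄ i₅ : V, ([i₁, i₂, i₃, i₄, i₅] : List V).Nodup →
    G.Adj i₁ i₂ → G.Adj i₂ i₃ → G.Adj i₃ i₄ → G.Adj i₄ i₅ →
    (G.Adj i₁ i₃ ∨ G.Adj i₁ i₄ ∨ G.Adj i₁ i₅)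

/-- A graph is chordal if every cycle of length `> 3` has a chord. -/
def IsChordal {V : Type*} (H : SimpleGraph V) : Prop :=
  ∀ (v : V) (w : H.Walk v v), w.IsCycle → 3 < w.length →
    ∃ a b, a ∈ w.support ∧ b ∈ w.support ∧ H.Adj a b ∧ s(a, b) ∉ w.edges

/-- The matroid basis exchange property for the edge set of a graph
(bases = edges, viewed as 2-element sets). -/
def ExchangeProp {V : Type*} [DecidableEq V] (G : SimpleGraph V) : Prop :=
  ∀ i j p q : V, G.Adj i j → G.Adj p q → i ∉ ({p, q} : Finset V) →
    ∃ k ∈ ({p, q} : Finset V), k ∉ ({i, j} : Finset V) ∧ G.Adj j k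

/-- `Δ` is a disjoint union of `d`-simplices and of "type 1" pairs of
`d`-simplices meeting in a common `(d-1)`-face. -/
def DisjointUnionStructure (Δ : Finset (Finset (Fin n))) (d : ℕ) : Prop :=
  (∀ s, s ∈ Δ ↔ ∃ F, IsFacet Δ F ∧ s ⊆ F) ∧
  (∀ F, IsFacet Δ F → F.card = d + 1) ∧
  (∀ F G, IsFacet Δ F → IsFacet Δ G → F ≠ G → (F ∩ G).Nonempty →
    (F \ G).card = 1 ∧ (G \ F).card = 1) ∧
  (∀ F G H, IsFacet Δ F → IsFacet Δ G → IsFacet Δ H → F ≠ G → (F ∩ G).Nonempty →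
    H ≠ F → H ≠ G → H ∩ (F ∪ G) = ∅)

section Homology

variable (K : Type*) [Field K]

/-- Auxiliary term of the simplicial boundary map. -/
noncomputable def bdryAux (Δ : Finset (Finset (Fin n))) (i : ℕ)
    (s : Finset (Fin n)) (a : Fin n) :
    ({t : Finset (Fin n) // t ∈ Δ ∧ t.card = i} →₀ K) :=
  if h : s.erase a ∈ Δ ∧ (s.erase a).card = i then
    ((-1 : K) ^ (s.filter (· < a)).card) • Finsupp.single ⟨s.erase a, h⟩ 1
  else 0

/-- The boundary map of the (augmented) simplicial chain complex of `Δ` over `K`,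
from chains on faces of cardinality `i+1` to chains on faces of cardinality `i`.
(Faces of cardinality `0`, i.e. the empty face, give the augmentation in degree `-1`,
so `ker (bdry K Δ m) / im (bdry K Δ (m+1))` is the reduced homology `H̃_m`.) -/
noncomputable def bdry (Δ : Finset (Finset (Fin n))) (i : ℕ) :
    ({t : Finset (Fin n) // t ∈ Δ ∧ t.card = i + 1} →₀ K) →ₗ[K]
      ({t : Finset (Fin n) // t ∈ Δ ∧ t.card = i} →₀ K) :=
  Finsupp.lsum K fun s => LinearMap.toSpanSingleton K _ (∑ a ∈ s.1, bdryAux K Δ i s.1 a)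

/-- The link of a face `F` in `Δ`. -/
def link (Δ : Finset (Finset (Fin n))) (F : Finset (Fin n)) : Finset (Finset (Fin n)) :=
  Δ.filter fun G => G ∩ F = ∅ ∧ G ∪ F ∈ Δ

end Homology

section Helpers

variable {Δ : Finset (Finset (Fin n))}

lemma notAdj_of_mem_face (hΔ : IsComplex Δ) {s : Finset (Fin n)} (hs : s ∈ Δ)
    {i j : Fin n} (hi : i ∈ s) (hj : j ∈ s) : ¬ (edgeGraph Δ).Adj i j := by
  rintro ⟨hne, hmem⟩
  apply hmem
  apply hΔ.1 s hs
  intro x hx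
  simp only [Finset.mem_insert, Finset.mem_singleton] at hx
  rcases hx with rfl | rfl <;> assumption

lemma mem_of_indep (hclique : CliqueComplexProp Δ) {s : Finset (Fin n)}
    (h : ∀ i ∈ s, ∀ j ∈ s, i ≠ j → ¬ (edgeGraph Δ).Adj i j) : s ∈ Δ := by
  rw [hclique]
  intro i hi j hj hij
  by_contra hmem
  exact h i hi j hj hij ⟨hij, hmem⟩

lemma crossnbr (hΔ : IsComplex Δ) (hclique : CliqueComplexProp Δ)
    {F : Finset (Fin n)} (hF : IsFacet Δ F) {v : Fin n} (hv : v ∉ F) :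
    ∃ u ∈ F, (edgeGraph Δ).Adj v u := by
  have hins : insert v F ∉ Δ := by
    intro hmem
    have := hF.2 _ hmem (Finset.subset_insert _ _)
    exact hv (this ▸ Finset.mem_insert_self v F)
  by_contra hno
  push_neg at hno
  apply hins (mem_of_indep hclique ?_)
  intro i hi j hj hij hadj
  simp only [Finset.mem_insert] at hi hj
  rcases hi with rfl | hi <;> rcases hj with rfl | hj
  · exact hij rfl
  · exact hno j hj hadj
  · exact hno i hi hadj.symm
  · exact notAdj_of_mem_face hΔ hF.1 hi hj hadj

lemma c4 (hchordal : IsChordal (edgeGraph Δ)ᶜ) {a b a' b' : Fin n}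
    (hab : (edgeGraph Δ).Adj a b) (hab' : (edgeGraph Δ).Adj a' b')
    (h1 : ¬(edgeGraph Δ).Adj a a') (h2 : ¬(edgeGraph Δ).Adj b b')
    (h3 : ¬(edgeGraph Δ).Adj a b') (h4 : ¬(edgeGraph Δ).Adj a' b)
    (d1 : a ≠ a') (d2 : b ≠ b') (d3 : a ≠ b') (d4 : a' ≠ b) : False := by
  set G := edgeGraph Δ with hG
  have dab : a ≠ b := hab.ne
  have dab' : a' ≠ b' := hab'.ne
  have e1 : Gᶜ.Adj a a' := ⟨d1, h1⟩
  have e2 : Gᶜ.Adj a' b := ⟨d4, h4⟩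
  have e3 : Gᶜ.Adj b b' := ⟨d2, h2⟩
  have e4 : Gᶜ.Adj b' a := ⟨fun h => d3 h.symm, fun h => h3 h.symm⟩
  set w : Gᶜ.Walk a a :=
    .cons e1 (.cons e2 (.cons e3 (.cons e4 .nil))) with hw
  have hcyc : w.IsCycle := by
    rw [SimpleGraph.Walk.isCycle_def, SimpleGraph.Walk.isTrail_def]
    refine ⟨?_, by simp [hw], ?_⟩
    · simp only [hw, SimpleGraph.Walk.edges_cons, SimpleGraph.Walk.edges_nil,
        List.nodup_cons, List.mem_cons, List.not_mem_nil, or_false, List.nodup_nil,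
        and_true, Sym2.eq_iff, not_or]
      push_neg
      tauto
    · simp only [hw, SimpleGraph.Walk.support_cons, SimpleGraph.Walk.support_nil,
        List.tail_cons, List.nodup_cons, List.mem_cons, List.not_mem_nil,
        List.mem_singleton, or_false, not_or, List.nodup_nil, and_true]
      push_neg
      tauto
  obtain ⟨x, y, hx, hy, hadj, hne⟩ := hchordal a w hcyc (by simp [hw])
  have hsup : w.support = [a, a', b, b', a] := by simp [hw]
  rw [hsup] at hx hy
  have hedges : w.edges = [s(a, a'), s(a', b), s(b, b'), s(b', a)] := by simp [hw]
  rw [hedges] at hne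
  simp only [List.mem_cons, List.not_mem_nil, or_false] at hx hy
  have hxy : x ≠ y := hadj.ne
  have hnadj : ¬ G.Adj x y := hadj.2
  rcases hx with rfl | rfl | rfl | rfl | rfl <;>
    rcases hy with rfl | rfl | rfl | rfl | rfl <;>
      first
        | exact hxy rfl
        | exact hnadj hab | exact hnadj hab.symm
        | exact hnadj hab' | exact hnadj hab'.symm
        | (exact hne (by simp [Sym2.eq_iff]))

lemma dist_two (hpath : FourPathChord (edgeGraph Δ)) {c u : Fin n}
    (hreach : (edgeGraph Δ).Reachable c u)
    (hcu : ¬(edgeGraph Δ).Adj c u) (hne : c ≠ u)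
    {z z' : Fin n} (hzz' : z ≠ z')
    (huz : (edgeGraph Δ).Adj u z) (huz' : (edgeGraph Δ).Adj u z')
    (hcz : ¬(edgeGraph Δ).Adj c z) (hcz' : ¬(edgeGraph Δ).Adj c z')
    (hcz2 : c ≠ z) (hcz2' : c ≠ z') :
    ∃ x, (edgeGraph Δ).Adj c x ∧ (edgeGraph Δ).Adj x u := by
  classical
  set G := edgeGraph Δ with hG
  obtain ⟨p0⟩ := hreach
  suffices h : ∀ k (p : G.Walk c u), p.IsPath → p.length ≤ k →
      ∃ x, G.Adj c x ∧ G.Adj x u by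
    exact h p0.bypass.length p0.bypass p0.bypass_isPath le_rfl
  intro k
  induction k with
  | zero =>
    intro p hp hlen
    have h0 : p.length = 0 := Nat.le_zero.mp hlen
    exact absurd (SimpleGraph.Walk.eq_of_length_eq_zero h0) hne
  | succ k ih =>
    intro p hp hlen
    cases p with
    | nil => exact absurd rfl hne
    | cons h1 q1 =>
      rename_i v1
      cases q1 with
      | nil => exact absurd h1 hcu
      | cons h2 q2 =>
        rename_i v2
        cases q2 with
        | nil => exact ⟨v1, h1, h2⟩
        | cons h3 q3 =>
          rename_i v3
          cases q3 with
          | nil =>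
            -- walk is c — v1 — v2 — u (v3 = u)
            have hsup := hp.support_nodup
            simp only [SimpleGraph.Walk.support_cons, SimpleGraph.Walk.support_nil,
              List.nodup_cons, List.mem_cons, List.mem_singleton, List.not_mem_nil,
              or_false, not_or, List.nodup_nil, and_true] at hsup
            set zz := if z = v2 then z' else z with hzzdef
            have hzzu : G.Adj u zz := by
              rw [hzzdef]; split <;> assumption
            have hczz : ¬G.Adj c zz := by
              rw [hzzdef]; split <;> assumption
            have hczz2 : c ≠ zz := by
              rw [hzzdef]; split <;> assumption
            have hzzv2 : zz ≠ v2 := by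
              rw [hzzdef]; split
              · rename_i hh; exact fun hcon => hzz' (hh.trans hcon.symm)
              · assumption
            have hzzv1 : zz ≠ v1 := fun h => hczz (h ▸ h1)
            have hnd : ([c, v1, v2, u, zz] : List (Fin n)).Nodup := by
              simp only [List.nodup_cons, List.mem_cons, List.mem_singleton,
                List.not_mem_nil, or_false, not_or, List.nodup_nil, and_true]
              refine ⟨⟨hsup.1.1, hsup.1.2.1, hsup.1.2.2, hczz2⟩,
                ⟨hsup.2.1.1, hsup.2.1.2, hzzv1.symm⟩,
                ⟨hsup.2.2.1, hzzv2.symm⟩, hzzu.ne, not_false⟩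
            rcases hpath c v1 v2 u zz hnd h1 h2 h3 hzzu with hc | hc | hc
            · exact ⟨v2, hc, h3⟩
            · exact absurd hc hcu
            · exact absurd hc hczz
          | cons h4 q4 =>
            rename_i v4
            have hsup := hp.support_nodup
            rw [SimpleGraph.Walk.support_cons, SimpleGraph.Walk.support_cons,
              SimpleGraph.Walk.support_cons, SimpleGraph.Walk.support_cons,
              q4.support_eq_cons] at hsup
            simp only [List.nodup_cons, List.mem_cons, not_or] at hsup
            have hnd : ([c, v1, v2, v3, v4] : List (Fin n)).Nodup := by
              simp only [List.nodup_cons, List.mem_cons, List.mem_singleton,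
                List.not_mem_nil, or_false, not_or, List.nodup_nil, and_true]
              exact ⟨⟨hsup.1.1, hsup.1.2.1, hsup.1.2.2.1, hsup.1.2.2.2.1⟩,
                ⟨hsup.2.1.1, hsup.2.1.2.1, hsup.2.1.2.2.1⟩,
                ⟨hsup.2.2.1.1, hsup.2.2.1.2.1⟩, ⟨hsup.2.2.2.1.1, not_false⟩⟩
            simp only [SimpleGraph.Walk.length_cons] at hlen
            rcases hpath c v1 v2 v3 v4 hnd h1 h2 h3 h4 with hc | hc | hc
            · refine ih (SimpleGraph.Walk.cons hc
                (SimpleGraph.Walk.cons h3 (SimpleGraph.Walk.cons h4 q4))).bypass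
                (SimpleGraph.Walk.bypass_isPath _) ?_
              have hb := SimpleGraph.Walk.length_bypass_le
                (SimpleGraph.Walk.cons hc
                  (SimpleGraph.Walk.cons h3 (SimpleGraph.Walk.cons h4 q4)))
              simp only [SimpleGraph.Walk.length_cons] at hb
              omega
            · refine ih (SimpleGraph.Walk.cons hc
                (SimpleGraph.Walk.cons h4 q4)).bypass
                (SimpleGraph.Walk.bypass_isPath _) ?_
              have hb := SimpleGraph.Walk.length_bypass_le
                (SimpleGraph.Walk.cons hc (SimpleGraph.Walk.cons h4 q4))
              simp only [SimpleGraph.Walk.length_cons] at hb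
              omega
            · refine ih (SimpleGraph.Walk.cons hc q4).bypass
                (SimpleGraph.Walk.bypass_isPath _) ?_
              have hb := SimpleGraph.Walk.length_bypass_le
                (SimpleGraph.Walk.cons hc q4)
              simp only [SimpleGraph.Walk.length_cons] at hb
              omega

lemma bad_false (hΔ : IsComplex Δ) (hpure : IsPure Δ) (hclique : CliqueComplexProp Δ)
    (hconn : (edgeGraph Δ).Connected) (hpath : FourPathChord (edgeGraph Δ))
    (hchordal : IsChordal (edgeGraph Δ)ᶜ)
    {F H : Finset (Fin n)} (hF : IsFacet Δ F) (hH : IsFacet Δ H)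
    {c : Fin n} (hcF : c ∈ F) (hcH : c ∈ H)
    {u w w' : Fin n} (huF : u ∈ F) (huH : u ∉ H)
    (hwH : w ∈ H) (hwF : w ∉ F) (hw'H : w' ∈ H) (hw'F : w' ∉ F) (hww' : w ≠ w')
    (h1 : (edgeGraph Δ).Adj u w) (h2 : (edgeGraph Δ).Adj u w') : False := by
  set G := edgeGraph Δ with hG
  have nadjF : ∀ {i j}, i ∈ F → j ∈ F → ¬G.Adj i j :=
    fun hi hj => notAdj_of_mem_face hΔ hF.1 hi hj
  have nadjH : ∀ {i j}, i ∈ H → j ∈ H → ¬G.Adj i j :=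
    fun hi hj => notAdj_of_mem_face hΔ hH.1 hi hj
  obtain ⟨x, hcx, hxu⟩ := dist_two hpath (hconn.preconnected c u)
    (nadjF hcF huF) (fun h => huH (h ▸ hcH)) hww' h1 h2
    (nadjH hcH hwH) (nadjH hcH hw'H) (fun h => hwF (h ▸ hcF)) (fun h => hw'F (h ▸ hcF))
  have S1 : ∀ z t : Fin n, z ∈ H → z ∉ F → G.Adj u z → t ∈ F → G.Adj t z → t = u := by
    intro z t hzH hzF huz htF htz
    by_contra htu
    have hcz : ¬G.Adj c z := nadjH hcH hzH
    have hnd : ([c, x, u, z, t] : List (Fin n)).Nodup := by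
      have n1 : c ≠ x := hcx.ne
      have n2 : c ≠ u := fun h => huH (h ▸ hcH)
      have n3 : c ≠ z := fun h => hzF (h ▸ hcF)
      have n4 : c ≠ t := fun h => hcz (h ▸ htz)
      have n5 : x ≠ u := hxu.ne
      have n6 : x ≠ z := fun h => hcz (h ▸ hcx)
      have n7 : x ≠ t := fun h => nadjF hcF htF (h ▸ hcx)
      have n8 : u ≠ z := huz.ne
      have n9 : u ≠ t := fun h => htu h.symm
      have n10 : z ≠ t := fun h => htz.ne h.symm
      simp only [List.nodup_cons, List.mem_cons, List.mem_singleton,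
        List.not_mem_nil, or_false, not_or, List.nodup_nil, and_true]
      exact ⟨⟨n1, n2, n3, n4⟩, ⟨n5, n6, n7⟩, ⟨n8, n9⟩, n10, not_false⟩
    rcases hpath c x u z t hnd hcx hxu huz htz.symm with hc | hc | hc
    · exact nadjF hcF huF hc
    · exact nadjH hcH hzH hc
    · exact nadjF hcF htF hc
  have hcards : 1 < (F \ H).card := by
    have hsub : ({w, w'} : Finset (Fin n)) ⊆ H \ F := by
      intro i hi
      simp only [Finset.mem_insert, Finset.mem_singleton] at hi
      rcases hi with rfl | rfl <;> exact Finset.mem_sdiff.mpr ⟨by assumption, by assumption⟩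
    have h2' : 2 ≤ (H \ F).card := by
      calc 2 = ({w, w'} : Finset (Fin n)).card := (Finset.card_pair hww').symm
        _ ≤ (H \ F).card := Finset.card_le_card hsub
    have heq : (F \ H).card = (H \ F).card :=
      Finset.card_sdiff_comm (hpure F H hF hH)
    omega
  obtain ⟨a₂, ha₂, ha₂u⟩ := Finset.exists_mem_ne hcards u
  obtain ⟨ha₂F, ha₂H⟩ := Finset.mem_sdiff.mp ha₂
  obtain ⟨b₂, hb₂H, hab₂⟩ := crossnbr hΔ hclique hH ha₂H
  have hb₂F : b₂ ∉ F := fun h => nadjF ha₂F h hab₂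
  by_cases hub₂ : G.Adj u b₂
  · exact ha₂u (S1 b₂ a₂ hb₂H hb₂F hub₂ ha₂F hab₂)
  · have hwb₂ : w ≠ b₂ := fun h => hub₂ (h ▸ h1)
    have ha₂w : ¬G.Adj a₂ w := fun h => ha₂u (S1 w a₂ hwH hwF h1 ha₂F h)
    exact c4 hchordal h1 hab₂ (nadjF huF ha₂F) (nadjH hwH hb₂H) hub₂ ha₂w
      (fun h => ha₂u h.symm) hwb₂ (fun h => hb₂F (h ▸ huF)) (fun h => hwF (h ▸ ha₂F))

end Helpers

/-- unique cross edge between two intersecting facets. -/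
theorem stmt1 (Δ : Finset (Finset (Fin n))) (hΔ : IsComplex Δ)
    (hpure : IsPure Δ) (hcore : FullCore Δ) (hclique : CliqueComplexProp Δ)
    (hconn : (edgeGraph Δ).Connected) (hpath : FourPathChord (edgeGraph Δ))
    (hchordal : IsChordal (edgeGraph Δ)ᶜ) :
    ∀ F H : Finset (Fin n), IsFacet Δ F → IsFacet Δ H → F ≠ H → (F ∩ H).Nonempty →
      ∃! p : Fin n × Fin n, p.1 ∈ F \ H ∧ p.2 ∈ H \ F ∧ (edgeGraph Δ).Adj p.1 p.2 := by
  intro F H hF hH hFH hinter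
  obtain ⟨c, hc⟩ := hinter
  obtain ⟨hcF, hcH⟩ := Finset.mem_inter.mp hc
  have nadjF : ∀ {i j}, i ∈ F → j ∈ F → ¬(edgeGraph Δ).Adj i j :=
    fun hi hj => notAdj_of_mem_face hΔ hF.1 hi hj
  have nadjH : ∀ {i j}, i ∈ H → j ∈ H → ¬(edgeGraph Δ).Adj i j :=
    fun hi hj => notAdj_of_mem_face hΔ hH.1 hi hj
  have hFHne : (F \ H).Nonempty := by
    rw [Finset.sdiff_nonempty]
    intro hsub
    exact hFH (hF.2 H hH.1 hsub)
  obtain ⟨a, ha⟩ := hFHne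
  obtain ⟨haF, haH⟩ := Finset.mem_sdiff.mp ha
  obtain ⟨b, hbH, hadj⟩ := crossnbr hΔ hclique hH haH
  have hbF : b ∉ F := fun h => nadjF haF h hadj
  refine ⟨(a, b), ⟨Finset.mem_sdiff.mpr ⟨haF, haH⟩, Finset.mem_sdiff.mpr ⟨hbH, hbF⟩, hadj⟩, ?_⟩
  rintro ⟨a', b'⟩ ⟨ha', hb', hadj'⟩
  obtain ⟨ha'F, ha'H⟩ := Finset.mem_sdiff.mp ha'
  obtain ⟨hb'H, hb'F⟩ := Finset.mem_sdiff.mp hb'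
  by_cases haa : a' = a
  · subst haa
    by_cases hbb : b' = b
    · subst hbb; rfl
    · exact absurd (bad_false hΔ hpure hclique hconn hpath hchordal hF hH hcF hcH
        ha'F ha'H hb'H hb'F hbH hbF hbb hadj' hadj) id
  · by_cases hbb : b' = b
    · subst hbb
      exact absurd (bad_false hΔ hpure hclique hconn hpath hchordal hH hF hcH hcF
        hb'H hb'F ha'F ha'H haF haH haa hadj'.symm hadj.symm) id
    · by_cases h5 : (edgeGraph Δ).Adj a' b
      · exact absurd (bad_false hΔ hpure hclique hconn hpath hchordal hF hH hcF hcH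
          ha'F ha'H hb'H hb'F hbH hbF hbb hadj' h5) id
      · by_cases h6 : (edgeGraph Δ).Adj a b'
        · exact absurd (bad_false hΔ hpure hclique hconn hpath hchordal hF hH hcF hcH
            haF haH hbH hbF hb'H hb'F (fun h => hbb h.symm) hadj h6) id
        · exact absurd (c4 hchordal hadj' hadj (nadjF ha'F haF) (nadjH hb'H hbH)
            h5 h6 haa hbb
            (fun h => hbF (h ▸ ha'F)) (fun h => hb'F (h ▸ haF))) id
end

section
/- Let $\Delta$ be a pure simplicial complex on $[n]$ with $\mathrm{core}\,\Delta = \Delta$, such that $K[\Delta]$ is a gCI and $I_\Delta$ has a 2-linear resolution. Then for any two distinct facets $F$ and $H$ with $F \cap H \neq \emptyset$, one has $|F \setminus H| = |H \setminus F| = 1$. -/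
open Finset

variable {n : ℕ}

section Aux

variable {Δ : Finset (Finset (Fin n))}

lemma face_pair (hΔ : IsComplex Δ) {s : Finset (Fin n)} {i j : Fin n}
    (hs : s ∈ Δ) (hi : i ∈ s) (hj : j ∈ s) : ({i, j} : Finset (Fin n)) ∈ Δ :=
  hΔ.1 s hs _ (by
    intro x hx
    simp only [Finset.mem_insert, Finset.mem_singleton] at hx
    rcases hx with rfl | rfl <;> assumption)

lemma not_adj_face (hΔ : IsComplex Δ) {s : Finset (Fin n)} {i j : Fin n}
    (hs : s ∈ Δ) (hi : i ∈ s) (hj : j ∈ s) : ¬ (edgeGraph Δ).Adj i j :=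
  fun h => h.2 (face_pair hΔ hs hi hj)

/-- Every vertex outside a facet has a `G_Δ`-neighbor inside it. -/
lemma exists_adj_facet (hΔ : IsComplex Δ) (hclique : CliqueComplexProp Δ)
    {H : Finset (Fin n)} {x : Fin n} (hH : IsFacet Δ H) (hx : x ∉ H) :
    ∃ y ∈ H, (edgeGraph Δ).Adj x y := by
  by_contra hcon
  push_neg at hcon
  have hpair : ∀ y ∈ H, ({x, y} : Finset (Fin n)) ∈ Δ := by
    intro y hy
    have hxy : x ≠ y := fun h => hx (h ▸ hy)
    by_contra hne
    exact hcon y hy ⟨hxy, hne⟩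
  have hins : insert x H ∈ Δ := by
    rw [hclique]
    intro i hi j hj hij
    rcases Finset.mem_insert.1 hi with hi' | hi' <;> rcases Finset.mem_insert.1 hj with hj' | hj'
    · exact absurd (hi'.trans hj'.symm) hij
    · subst hi'; exact hpair j hj'
    · subst hj'; rw [Finset.pair_comm]; exact hpair i hi'
    · exact face_pair hΔ hH.1 hi' hj'
  have := hH.2 _ hins (Finset.subset_insert x H)
  exact hx (this ▸ Finset.mem_insert_self x H)

/-- Every vertex of `F \ H` has a `G_Δ`-neighbor in `H \ F`. -/
lemma cross_edge (hΔ : IsComplex Δ) (hclique : CliqueComplexProp Δ)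
    {F H : Finset (Fin n)} {a : Fin n} (hF : IsFacet Δ F) (hH : IsFacet Δ H)
    (ha : a ∈ F \ H) : ∃ b ∈ H \ F, (edgeGraph Δ).Adj a b := by
  obtain ⟨haF, haH⟩ := Finset.mem_sdiff.1 ha
  obtain ⟨y, hyH, hadj⟩ := exists_adj_facet hΔ hclique hH haH
  refine ⟨y, Finset.mem_sdiff.2 ⟨hyH, fun hyF => ?_⟩, hadj⟩
  exact not_adj_face hΔ hF.1 haF hyF hadj

/-- The chordality of the complement graph forbids "induced 2-matchings" across
two intersecting facets. -/
lemma chord_step (hΔ : IsComplex Δ) (hchordal : IsChordal (edgeGraph Δ)ᶜ)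
    {F H : Finset (Fin n)} {a a' b b' : Fin n}
    (hF : F ∈ Δ) (hH : H ∈ Δ)
    (ha : a ∈ F \ H) (ha' : a' ∈ F \ H) (hb : b ∈ H \ F) (hb' : b' ∈ H \ F)
    (haa' : a ≠ a') (hbb' : b ≠ b')
    (e1 : (edgeGraph Δ).Adj a b) (e2 : (edgeGraph Δ).Adj a' b') :
    (edgeGraph Δ).Adj a b' ∨ (edgeGraph Δ).Adj a' b := by
  by_contra hcon
  push_neg at hcon
  obtain ⟨hab', ha'b⟩ := hcon
  obtain ⟨haF, haH⟩ := Finset.mem_sdiff.1 ha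
  obtain ⟨ha'F, ha'H⟩ := Finset.mem_sdiff.1 ha'
  obtain ⟨hbH, hbF⟩ := Finset.mem_sdiff.1 hb
  obtain ⟨hb'H, hb'F⟩ := Finset.mem_sdiff.1 hb'
  have hab : a ≠ b := fun h => hbF (h ▸ haF)
  have hab'ne : a ≠ b' := fun h => hb'F (h ▸ haF)
  have ha'b_ne : a' ≠ b := fun h => hbF (h ▸ ha'F)
  have ha'b' : a' ≠ b' := fun h => hb'F (h ▸ ha'F)
  -- the 4-cycle a — a' — b — b' — a in the complement graph
  have c1 : (edgeGraph Δ)ᶜ.Adj a a' :=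
    (SimpleGraph.compl_adj _ _ _).2 ⟨haa', not_adj_face hΔ hF haF ha'F⟩
  have c2 : (edgeGraph Δ)ᶜ.Adj a' b :=
    (SimpleGraph.compl_adj _ _ _).2 ⟨ha'b_ne, ha'b⟩
  have c3 : (edgeGraph Δ)ᶜ.Adj b b' :=
    (SimpleGraph.compl_adj _ _ _).2 ⟨hbb', not_adj_face hΔ hH hbH hb'H⟩
  have c4 : (edgeGraph Δ)ᶜ.Adj b' a :=
    (SimpleGraph.compl_adj _ _ _).2 ⟨fun h => hab'ne h.symm,
      fun h => hab' h.symm⟩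
  set W : (edgeGraph Δ)ᶜ.Walk a a :=
    SimpleGraph.Walk.cons c1 (SimpleGraph.Walk.cons c2
      (SimpleGraph.Walk.cons c3 (SimpleGraph.Walk.cons c4 SimpleGraph.Walk.nil))) with hW
  have hedges : W.edges = [s(a, a'), s(a', b), s(b, b'), s(b', a)] := by
    simp [hW]
  have hsupp : W.support = [a, a', b, b', a] := by simp [hW]
  have hcyc : W.IsCycle := by
    constructor
    · constructor
      · constructor
        rw [hedges]
        simp [List.nodup_cons, Sym2.eq_iff, haa', hbb', hab, hab'ne, ha'b_ne, ha'b',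
          haa'.symm, hbb'.symm, hab.symm, hab'ne.symm, ha'b_ne.symm, ha'b'.symm]
      · simp [hW]
    · rw [hsupp]
      simp [List.nodup_cons, haa', hbb', hab, hab'ne, ha'b_ne, ha'b',
        haa'.symm, hbb'.symm, hab.symm, hab'ne.symm, ha'b_ne.symm, ha'b'.symm]
  have hlen : 3 < W.length := by simp [hW]
  obtain ⟨x, y, hxs, hys, hadj, hne⟩ := hchordal a W hcyc hlen
  rw [hsupp] at hxs hys
  rw [hedges] at hne
  obtain ⟨hxy, hnadj⟩ := (SimpleGraph.compl_adj _ _ _).1 hadj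
  simp only [List.mem_cons, List.not_mem_nil, or_false] at hxs hys
  rcases hxs with rfl | rfl | rfl | rfl | rfl <;>
    rcases hys with rfl | rfl | rfl | rfl | rfl <;>
    first
      | exact hxy rfl
      | exact hnadj e1
      | exact hnadj e2
      | exact hnadj e1.symm
      | exact hnadj e2.symm
      | exact hne (by simp [Sym2.eq_iff])

/-- If `|F \ H| ≥ 2` then every `a ∈ F \ H` has a cross-neighbor `b ∈ H \ F`
which also has a second cross-neighbor `a' ∈ F \ H`. -/
lemma two_cross (hΔ : IsComplex Δ) (hclique : CliqueComplexProp Δ)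
    (hchordal : IsChordal (edgeGraph Δ)ᶜ)
    {F H : Finset (Fin n)} {a : Fin n} (hF : IsFacet Δ F) (hH : IsFacet Δ H)
    (h2 : 2 ≤ (F \ H).card) (ha : a ∈ F \ H) :
    ∃ b ∈ H \ F, ∃ a' ∈ F \ H, a' ≠ a ∧
      (edgeGraph Δ).Adj a b ∧ (edgeGraph Δ).Adj a' b := by
  obtain ⟨b₀, hb₀, hab₀⟩ := cross_edge hΔ hclique hF hH ha
  by_cases hex : ∃ a' ∈ F \ H, a' ≠ a ∧ (edgeGraph Δ).Adj a' b₀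
  · obtain ⟨a', ha', hne, hadj⟩ := hex
    exact ⟨b₀, hb₀, a', ha', hne, hab₀, hadj⟩
  · push_neg at hex
    obtain ⟨a₂, ha₂, ha₂ne⟩ :=
      Finset.exists_mem_ne (show 1 < (F \ H).card by omega) a
    obtain ⟨b₂, hb₂, ha₂b₂⟩ := cross_edge hΔ hclique hF hH ha₂
    have hb₂ne : b₀ ≠ b₂ := by
      rintro rfl
      exact hex a₂ ha₂ ha₂ne ha₂b₂
    rcases chord_step hΔ hchordal hF.1 hH.1 ha ha₂ hb₀ hb₂ (Ne.symm ha₂ne) hb₂ne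
        hab₀ ha₂b₂ with hc | hc
    · exact ⟨b₂, hb₂, a₂, ha₂, ha₂ne, hc, ha₂b₂⟩
    · exact absurd hc (hex a₂ ha₂ ha₂ne)

end Aux

/-- intersecting facets differ in exactly one vertex on each side. -/
theorem stmt2 (Δ : Finset (Finset (Fin n))) (hΔ : IsComplex Δ)
    (hpure : IsPure Δ) (hcore : FullCore Δ) (hclique : CliqueComplexProp Δ)
    (hconn : (edgeGraph Δ).Connected) (hpath : FourPathChord (edgeGraph Δ))
    (hchordal : IsChordal (edgeGraph Δ)ᶜ) :
    ∀ F H : Finset (Fin n), IsFacet Δ F → IsFacet Δ H → F ≠ H → (F ∩ H).Nonempty →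
      (F \ H).card = 1 ∧ (H \ F).card = 1 := by
  intro F H hF hH hFH hint
  have hcard : (F \ H).card = (H \ F).card := by
    have h1 := Finset.card_sdiff_add_card_inter F H
    have h2 := Finset.card_sdiff_add_card_inter H F
    have h3 : (F ∩ H).card = (H ∩ F).card := by rw [Finset.inter_comm]
    have h4 := hpure F H hF hH
    omega
  have hAne : (F \ H).Nonempty := by
    rw [Finset.sdiff_nonempty]
    intro hsub
    exact hFH (hF.2 H hH.1 hsub)
  have hA1 : 1 ≤ (F \ H).card := Finset.card_pos.2 hAne
  by_contra hcon
  have h2 : 2 ≤ (F \ H).card := by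
    rcases Nat.lt_or_ge (F \ H).card 2 with h | h
    · exact absurd ⟨by omega, by omega⟩ hcon
    · exact h
  have h2' : 2 ≤ (H \ F).card := by omega
  clear hcon
  obtain ⟨v, hv⟩ := hint
  have hvF : v ∈ F := (Finset.mem_inter.1 hv).1
  have hvH : v ∈ H := (Finset.mem_inter.1 hv).2
  have hfaceF : ∀ x y, x ∈ F → y ∈ F → ¬ (edgeGraph Δ).Adj x y :=
    fun x y hx hy => not_adj_face hΔ hF.1 hx hy
  have hfaceH : ∀ x y, x ∈ H → y ∈ H → ¬ (edgeGraph Δ).Adj x y :=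
    fun x y hx hy => not_adj_face hΔ hH.1 hx hy
  have houtside : ∀ x, (edgeGraph Δ).Adj v x → x ∉ F ∧ x ∉ H := by
    intro x hx
    exact ⟨fun hxF => hfaceF v x hvF hxF hx, fun hxH => hfaceH v x hvH hxH hx⟩
  obtain ⟨t₀, ht₀, hmind⟩ := Finset.exists_min_image ((F \ H) ∪ (H \ F))
    ((edgeGraph Δ).dist v) ⟨hAne.choose, Finset.mem_union_left _ hAne.choose_spec⟩
  obtain ⟨w, hwlen⟩ := hconn.exists_walk_length_eq_dist v t₀
  have hwmin : ∀ t ∈ (F \ H) ∪ (H \ F), ∀ q : (edgeGraph Δ).Walk v t,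
      w.length ≤ q.length := by
    intro t ht q
    rw [hwlen]
    exact (hmind t ht).trans (SimpleGraph.dist_le q)
  clear hwlen hmind
  cases w with
  | nil =>
    rcases Finset.mem_union.1 ht₀ with h | h
    · exact (Finset.mem_sdiff.1 h).2 hvH
    · exact (Finset.mem_sdiff.1 h).2 hvF
  | cons h₁ w₁ =>
    rename_i x₁
    cases w₁ with
    | nil =>
      rcases Finset.mem_union.1 ht₀ with h | h
      · exact hfaceF _ _ hvF (Finset.mem_sdiff.1 h).1 h₁
      · exact hfaceH _ _ hvH (Finset.mem_sdiff.1 h).1 h₁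
    | cons h₂ w₂ =>
      rename_i x₂
      cases w₂ with
      | nil =>
        -- k = 2 : the walk is v — x₁ — t₀
        obtain ⟨hx₁F, hx₁H⟩ := houtside x₁ h₁
        rcases Finset.mem_union.1 ht₀ with hA | hB
        · obtain ⟨b, hb, a', ha', hne, hadj1, hadj2⟩ :=
            two_cross hΔ hclique hchordal hF hH h2 hA
          obtain ⟨ht₀F, ht₀H⟩ := Finset.mem_sdiff.1 hA
          obtain ⟨hbH, hbF⟩ := Finset.mem_sdiff.1 hb
          obtain ⟨ha'F, ha'H⟩ := Finset.mem_sdiff.1 ha'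
          have n1 : v ≠ x₁ := h₁.ne
          have n2 : v ≠ t₀ := fun h => ht₀H (h ▸ hvH)
          have n3 : v ≠ b := fun h => hbF (h ▸ hvF)
          have n4 : v ≠ a' := fun h => ha'H (h ▸ hvH)
          have n5 : x₁ ≠ t₀ := fun h => hx₁F (h ▸ ht₀F)
          have n6 : x₁ ≠ b := fun h => hx₁H (h ▸ hbH)
          have n7 : x₁ ≠ a' := fun h => hx₁F (h ▸ ha'F)
          have n8 : t₀ ≠ b := fun h => hbF (h ▸ ht₀F)
          have n9 : t₀ ≠ a' := fun h => hne h.symm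
          have n10 : b ≠ a' := fun h => ha'H (h ▸ hbH)
          rcases hpath v x₁ t₀ b a' (by simp [n1, n2, n3, n4, n5, n6, n7, n8, n9, n10])
              h₁ h₂ hadj1 hadj2.symm with hc | hc | hc
          · exact hfaceF v t₀ hvF ht₀F hc
          · exact hfaceH v b hvH hbH hc
          · exact hfaceF v a' hvF ha'F hc
        · obtain ⟨b, hb, a', ha', hne, hadj1, hadj2⟩ :=
            two_cross hΔ hclique hchordal hH hF h2' hB
          obtain ⟨ht₀H, ht₀F⟩ := Finset.mem_sdiff.1 hB
          obtain ⟨hbF, hbH⟩ := Finset.mem_sdiff.1 hb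
          obtain ⟨ha'H, ha'F⟩ := Finset.mem_sdiff.1 ha'
          have n1 : v ≠ x₁ := h₁.ne
          have n2 : v ≠ t₀ := fun h => ht₀F (h ▸ hvF)
          have n3 : v ≠ b := fun h => hbH (h ▸ hvH)
          have n4 : v ≠ a' := fun h => ha'F (h ▸ hvF)
          have n5 : x₁ ≠ t₀ := fun h => hx₁H (h ▸ ht₀H)
          have n6 : x₁ ≠ b := fun h => hx₁F (h ▸ hbF)
          have n7 : x₁ ≠ a' := fun h => hx₁H (h ▸ ha'H)
          have n8 : t₀ ≠ b := fun h => hbH (h ▸ ht₀H)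
          have n9 : t₀ ≠ a' := fun h => hne h.symm
          have n10 : b ≠ a' := fun h => ha'F (h ▸ hbF)
          rcases hpath v x₁ t₀ b a' (by simp [n1, n2, n3, n4, n5, n6, n7, n8, n9, n10])
              h₁ h₂ hadj1 hadj2.symm with hc | hc | hc
          · exact hfaceH v t₀ hvH ht₀H hc
          · exact hfaceF v b hvF hbF hc
          · exact hfaceH v a' hvH ha'H hc
      | cons h₃ w₃ =>
        rename_i x₃
        cases w₃ with
        | nil =>
          -- k = 3 : the walk is v — x₁ — x₂ — t₀
          obtain ⟨hx₁F, hx₁H⟩ := houtside x₁ h₁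
          have hvx₂ : ¬ (edgeGraph Δ).Adj v x₂ := by
            intro hc
            have := hwmin t₀ ht₀ (SimpleGraph.Walk.cons hc
              (SimpleGraph.Walk.cons h₃ SimpleGraph.Walk.nil))
            simp [SimpleGraph.Walk.length_cons] at this
          have nvx₂ : v ≠ x₂ := by
            intro h
            subst h
            rcases Finset.mem_union.1 ht₀ with hA | hB
            · exact hfaceF v t₀ hvF (Finset.mem_sdiff.1 hA).1 h₃
            · exact hfaceH v t₀ hvH (Finset.mem_sdiff.1 hB).1 h₃
          rcases Finset.mem_union.1 ht₀ with hA | hB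
          · obtain ⟨b, hb, hadjb⟩ := cross_edge hΔ hclique hF hH hA
            obtain ⟨ht₀F, ht₀H⟩ := Finset.mem_sdiff.1 hA
            obtain ⟨hbH, hbF⟩ := Finset.mem_sdiff.1 hb
            have nx₂b : x₂ ≠ b := by
              intro h
              subst h
              have := hwmin x₂ (Finset.mem_union_right _ hb)
                (SimpleGraph.Walk.cons h₁ (SimpleGraph.Walk.cons h₂ SimpleGraph.Walk.nil))
              simp [SimpleGraph.Walk.length_cons] at this
            have n1 : v ≠ x₁ := h₁.ne
            have n2 : v ≠ t₀ := fun h => ht₀H (h ▸ hvH)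
            have n3 : v ≠ b := fun h => hbF (h ▸ hvF)
            have n4 : x₁ ≠ x₂ := h₂.ne
            have n5 : x₁ ≠ t₀ := fun h => hx₁F (h ▸ ht₀F)
            have n6 : x₁ ≠ b := fun h => hx₁H (h ▸ hbH)
            have n7 : x₂ ≠ t₀ := h₃.ne
            have n8 : t₀ ≠ b := fun h => hbF (h ▸ ht₀F)
            rcases hpath v x₁ x₂ t₀ b
                (by simp [n1, nvx₂, n2, n3, n4, n5, n6, n7, nx₂b, n8])
                h₁ h₂ h₃ hadjb with hc | hc | hc
            · exact hvx₂ hc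
            · exact hfaceF v t₀ hvF ht₀F hc
            · exact hfaceH v b hvH hbH hc
          · obtain ⟨b, hb, hadjb⟩ := cross_edge hΔ hclique hH hF hB
            obtain ⟨ht₀H, ht₀F⟩ := Finset.mem_sdiff.1 hB
            obtain ⟨hbF, hbH⟩ := Finset.mem_sdiff.1 hb
            have nx₂b : x₂ ≠ b := by
              intro h
              subst h
              have := hwmin x₂ (Finset.mem_union_left _ hb)
                (SimpleGraph.Walk.cons h₁ (SimpleGraph.Walk.cons h₂ SimpleGraph.Walk.nil))
              simp [SimpleGraph.Walk.length_cons] at this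
            have n1 : v ≠ x₁ := h₁.ne
            have n2 : v ≠ t₀ := fun h => ht₀F (h ▸ hvF)
            have n3 : v ≠ b := fun h => hbH (h ▸ hvH)
            have n4 : x₁ ≠ x₂ := h₂.ne
            have n5 : x₁ ≠ t₀ := fun h => hx₁H (h ▸ ht₀H)
            have n6 : x₁ ≠ b := fun h => hx₁F (h ▸ hbF)
            have n7 : x₂ ≠ t₀ := h₃.ne
            have n8 : t₀ ≠ b := fun h => hbH (h ▸ ht₀H)
            rcases hpath v x₁ x₂ t₀ b
                (by simp [n1, nvx₂, n2, n3, n4, n5, n6, n7, nx₂b, n8])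
                h₁ h₂ h₃ hadjb with hc | hc | hc
            · exact hvx₂ hc
            · exact hfaceH v t₀ hvH ht₀H hc
            · exact hfaceF v b hvF hbF hc
        | cons h₄ w₄ =>
          rename_i x₄
          -- k ≥ 4 : the walk starts v — x₁ — x₂ — x₃ — x₄ — ⋯ — t₀
          have hlt : ∀ q : (edgeGraph Δ).Walk v t₀, q.length < w₄.length + 4 → False := by
            intro q hq
            have := hwmin t₀ ht₀ q
            simp [SimpleGraph.Walk.length_cons] at this
            omega
          have cvx₂ : ¬ (edgeGraph Δ).Adj v x₂ := fun h =>
            hlt (SimpleGraph.Walk.cons h (SimpleGraph.Walk.cons h₃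
              (SimpleGraph.Walk.cons h₄ w₄))) (by simp only [SimpleGraph.Walk.length_cons]; omega)
          have cvx₃ : ¬ (edgeGraph Δ).Adj v x₃ := fun h =>
            hlt (SimpleGraph.Walk.cons h (SimpleGraph.Walk.cons h₄ w₄))
              (by simp only [SimpleGraph.Walk.length_cons]; omega)
          have cvx₄ : ¬ (edgeGraph Δ).Adj v x₄ := fun h =>
            hlt (SimpleGraph.Walk.cons h w₄) (by simp only [SimpleGraph.Walk.length_cons]; omega)
          have n1 : v ≠ x₁ := h₁.ne
          have n2 : v ≠ x₂ := by
            intro h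
            subst h
            exact hlt (SimpleGraph.Walk.cons h₃ (SimpleGraph.Walk.cons h₄ w₄))
              (by simp only [SimpleGraph.Walk.length_cons]; omega)
          have n3 : v ≠ x₃ := by
            intro h
            subst h
            exact hlt (SimpleGraph.Walk.cons h₄ w₄)
              (by simp only [SimpleGraph.Walk.length_cons]; omega)
          have n4 : v ≠ x₄ := by
            intro h
            subst h
            exact hlt w₄ (by omega)
          have n5 : x₁ ≠ x₂ := h₂.ne
          have n6 : x₁ ≠ x₃ := by
            intro h
            subst h
            exact hlt (SimpleGraph.Walk.cons h₁ (SimpleGraph.Walk.cons h₄ w₄))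
              (by simp only [SimpleGraph.Walk.length_cons]; omega)
          have n7 : x₁ ≠ x₄ := by
            intro h
            subst h
            exact hlt (SimpleGraph.Walk.cons h₁ w₄)
              (by simp only [SimpleGraph.Walk.length_cons]; omega)
          have n8 : x₂ ≠ x₃ := h₃.ne
          have n9 : x₂ ≠ x₄ := by
            intro h
            subst h
            exact hlt (SimpleGraph.Walk.cons h₁ (SimpleGraph.Walk.cons h₂ w₄))
              (by simp only [SimpleGraph.Walk.length_cons]; omega)
          have n10 : x₃ ≠ x₄ := h₄.ne
          rcases hpath v x₁ x₂ x₃ x₄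
              (by simp [n1, n2, n3, n4, n5, n6, n7, n8, n9, n10])
              h₁ h₂ h₃ h₄ with hc | hc | hc
          · exact cvx₂ hc
          · exact cvx₃ hc
          · exact cvx₄ hc
end

section
/- Let $\Delta$ be a pure simplicial complex of dimension $\geq 2$ on $[n]$ with $\mathrm{core}\,\Delta = \Delta$, such that $K[\Delta]$ is a gCI and $I_\Delta$ has a 2-linear resolution. Then no three distinct facets pairwise intersect a common facet: if $F, G$ are distinct facets with $F \cap G \neq \emptyset$, then there is no third facet $H$ with $H \cap (F \cup G) \neq \emptyset$. Consequently $\Delta$ is a disjoint union of single facets and pairs of facets $(F,G)$ with $|F \setminus G| = |G \setminus F| = 1$. -/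
open Finset

variable {n : ℕ}

section MyAux

variable {n : ℕ}

lemma myNotAdj {Δ : Finset (Finset (Fin n))} (hΔ : IsComplex Δ)
    {F : Finset (Fin n)} (hF : F ∈ Δ) {u v : Fin n} (hu : u ∈ F) (hv : v ∈ F) :
    ¬ (edgeGraph Δ).Adj u v := by
  rintro ⟨hne, hpair⟩
  apply hpair
  apply hΔ.1 F hF
  intro a ha
  simp only [Finset.mem_insert, Finset.mem_singleton] at ha
  rcases ha with h | h <;> subst h <;> assumption

lemma myFacetNbr {Δ : Finset (Finset (Fin n))} (hΔ : IsComplex Δ)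
    (hclique : CliqueComplexProp Δ) {F : Finset (Fin n)} (hF : IsFacet Δ F)
    {v : Fin n} (hv : v ∉ F) : ∃ u ∈ F, (edgeGraph Δ).Adj v u := by
  by_contra h
  push_neg at h
  have hins : insert v F ∈ Δ := by
    rw [hclique]
    intro i hi j hj hij
    simp only [Finset.mem_insert] at hi hj
    rcases hi with rfl | hi
    · rcases hj with rfl | hj
      · exact absurd rfl hij
      · by_contra hp
        exact h j hj ⟨hij, hp⟩
    · rcases hj with rfl | hj
      · rw [Finset.pair_comm]
        by_contra hp
        exact h i hi ⟨hij.symm, hp⟩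
      · apply hΔ.1 F hF.1
        intro a ha
        simp only [Finset.mem_insert, Finset.mem_singleton] at ha
        rcases ha with h | h <;> subst h <;> assumption
  have := hF.2 _ hins (Finset.subset_insert _ _)
  exact hv (this ▸ Finset.mem_insert_self v F)

lemma myExchange {Δ : Finset (Finset (Fin n))} (hΔ : IsComplex Δ)
    (hclique : CliqueComplexProp Δ) {F H : Finset (Fin n)} (hF : IsFacet Δ F)
    (hH : H ∈ Δ) {v : Fin n} (hvH : v ∈ H) (hvF : v ∉ F) :
    ∃ u, u ∈ F ∧ u ∉ H ∧ (edgeGraph Δ).Adj v u := by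
  obtain ⟨u, huF, hadj⟩ := myFacetNbr hΔ hclique hF hvF
  exact ⟨u, huF, fun huH => myNotAdj hΔ hH hvH huH hadj, hadj⟩

lemma myNo2K2 {Δ : Finset (Finset (Fin n))} (hchordal : IsChordal (edgeGraph Δ)ᶜ)
    {x x' y y' : Fin n}
    (hxx' : x ≠ x') (hyy' : y ≠ y') (hxy' : x ≠ y') (hx'y : x' ≠ y)
    (haxy : (edgeGraph Δ).Adj x y) (hax'y' : (edgeGraph Δ).Adj x' y')
    (h1 : ¬ (edgeGraph Δ).Adj x x') (h2 : ¬ (edgeGraph Δ).Adj y y')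
    (h3 : ¬ (edgeGraph Δ).Adj x y') (h4 : ¬ (edgeGraph Δ).Adj x' y) :
    False := by
  have hxy : x ≠ y := haxy.ne
  have hx'y'2 : x' ≠ y' := hax'y'.ne
  have e1 : (edgeGraph Δ)ᶜ.Adj x x' := (SimpleGraph.compl_adj _ _ _).mpr ⟨hxx', h1⟩
  have e2 : (edgeGraph Δ)ᶜ.Adj x' y := (SimpleGraph.compl_adj _ _ _).mpr ⟨hx'y, h4⟩
  have e3 : (edgeGraph Δ)ᶜ.Adj y y' := (SimpleGraph.compl_adj _ _ _).mpr ⟨hyy', h2⟩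
  have e4 : (edgeGraph Δ)ᶜ.Adj y' x :=
    (SimpleGraph.compl_adj _ _ _).mpr ⟨hxy'.symm, fun h => h3 h.symm⟩
  let w : (edgeGraph Δ)ᶜ.Walk x x :=
    .cons e1 (.cons e2 (.cons e3 (.cons e4 .nil)))
  have hcyc : w.IsCycle := by
    refine ⟨⟨⟨?_⟩, by simp [w]⟩, ?_⟩
    · simp [w, Sym2.eq_iff, hxx', hyy', hxy', hx'y, hxy, hx'y'2,
        hxx'.symm, hyy'.symm, hxy'.symm, hx'y.symm, hxy.symm, hx'y'2.symm]
    · simp [w, hxx', hyy', hxy', hx'y, hxy, hx'y'2,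
        hxx'.symm, hyy'.symm, hxy'.symm, hx'y.symm, hxy.symm, hx'y'2.symm]
  obtain ⟨a, b, ha, hb, hadj, hne⟩ := hchordal x w hcyc (by simp [w])
  rw [SimpleGraph.compl_adj] at hadj
  simp only [w, SimpleGraph.Walk.support_cons, SimpleGraph.Walk.support_nil,
    List.mem_cons, List.mem_singleton, List.not_mem_nil, or_false] at ha hb
  simp only [w, SimpleGraph.Walk.edges_cons, SimpleGraph.Walk.edges_nil,
    List.mem_cons, List.not_mem_nil, or_false] at hne
  push_neg at hne
  obtain ⟨hne1, hne2, hne3, hne4⟩ := hne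
  rcases ha with rfl | rfl | rfl | rfl | rfl <;>
    rcases hb with rfl | rfl | rfl | rfl | rfl <;>
      first
        | exact hadj.1 rfl
        | exact hne1 rfl
        | exact hne2 rfl
        | exact hne3 rfl
        | exact hne4 rfl
        | exact hne1 (Sym2.eq_swap)
        | exact hne2 (Sym2.eq_swap)
        | exact hne3 (Sym2.eq_swap)
        | exact hne4 (Sym2.eq_swap)
        | exact hadj.2 haxy
        | exact hadj.2 hax'y'
        | exact hadj.2 haxy.symm
        | exact hadj.2 hax'y'.symm

lemma myNoIsland {Δ : Finset (Finset (Fin n))} (hconn : (edgeGraph Δ).Connected)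
    (hpath : FourPathChord (edgeGraph Δ)) (T : Fin n → Prop)
    (hstruct : ∀ t, T t → ∃ t₂ t₃, T t₂ ∧ T t₃ ∧ t ≠ t₃ ∧ t₂ ≠ t₃ ∧
      (edgeGraph Δ).Adj t t₂ ∧ (edgeGraph Δ).Adj t₂ t₃)
    {z t0 : Fin n} (hz1 : ¬ T z) (hz2 : ∀ t, T t → ¬ (edgeGraph Δ).Adj z t)
    (ht0 : T t0) : False := by
  set G := edgeGraph Δ with hG
  let U : Fin n → Prop := fun v => ¬ T v ∧ ∀ t, T t → ¬ G.Adj v t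
  have step : ∀ v u, U v → G.Adj v u → U u := by
    intro v u hv hvu
    by_contra hu
    rcases Classical.em (T u) with hTu | hTu
    · exact hv.2 u hTu hvu
    · have hex : ∃ t, T t ∧ G.Adj u t := by
        by_contra hcon
        push_neg at hcon
        exact hu ⟨hTu, hcon⟩
      obtain ⟨t, hTt, hut⟩ := hex
      obtain ⟨t₂, t₃, hT2, hT3, ht3, h23, ha1, ha2⟩ := hstruct t hTt
      have hvt : v ≠ t := fun h => hv.1 (h ▸ hTt)
      have hvt2 : v ≠ t₂ := fun h => hv.1 (h ▸ hT2)
      have hvt3 : v ≠ t₃ := fun h => hv.1 (h ▸ hT3)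
      have hut2 : u ≠ t₂ := fun h => hTu (h ▸ hT2)
      have hut3 : u ≠ t₃ := fun h => hTu (h ▸ hT3)
      have hnodup : ([v, u, t, t₂, t₃] : List (Fin n)).Nodup := by
        have h12 : t ≠ t₂ := ha1.ne
        simp [hvu.ne, hvt, hvt2, hvt3, hut.ne, hut2, hut3, h12, ht3, h23]
      rcases hpath v u t t₂ t₃ hnodup hvu hut ha1 ha2 with h | h | h
      · exact hv.2 t hTt h
      · exact hv.2 t₂ hT2 h
      · exact hv.2 t₃ hT3 h
  have walkU : ∀ {a b : Fin n}, G.Walk a b → U a → U b := by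
    intro a b p
    induction p with
    | nil => exact id
    | cons h q ih => exact fun ha => ih (step _ _ ha h)
  obtain ⟨p⟩ := hconn.preconnected z t0
  exact (walkU p ⟨hz1, hz2⟩).1 ht0

end MyAux

section MyMain

variable {n : ℕ}

/-- one-sided structure: a vertex of `F \ H` has a 2-step path inside `(F\H) ∪ (H\F)`. -/
lemma myStructSide {Δ : Finset (Finset (Fin n))} (hΔ : IsComplex Δ)
    (hclique : CliqueComplexProp Δ) (hchordal : IsChordal (edgeGraph Δ)ᶜ)
    {F H : Finset (Fin n)} (hF : IsFacet Δ F) (hH : IsFacet Δ H)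
    (h2 : 2 ≤ (F \ H).card) {t : Fin n} (ht : t ∈ F \ H) :
    ∃ t₂ t₃, t₂ ∈ H \ F ∧ t₃ ∈ F \ H ∧ t₃ ≠ t ∧
      (edgeGraph Δ).Adj t t₂ ∧ (edgeGraph Δ).Adj t₂ t₃ := by
  rw [Finset.mem_sdiff] at ht
  obtain ⟨y, hyH, hyF, hty⟩ := myExchange hΔ hclique hH hF.1 ht.1 ht.2
  obtain ⟨a', ha'A, ha't⟩ := Finset.exists_mem_ne h2 t
  rw [Finset.mem_sdiff] at ha'A
  obtain ⟨y', hy'H, hy'F, ha'y'⟩ := myExchange hΔ hclique hH hF.1 ha'A.1 ha'A.2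
  have hyB : y ∈ H \ F := Finset.mem_sdiff.mpr ⟨hyH, hyF⟩
  have ha'mem : a' ∈ F \ H := Finset.mem_sdiff.mpr ha'A
  by_cases hyy' : y = y'
  · exact ⟨y, a', hyB, ha'mem, ha't, hty,
      (hyy' ▸ ha'y').symm⟩
  · -- use no2K2 on (t,y) and (a',y')
    have hty' : t ≠ y' := fun h => hy'F (h ▸ ht.1)
    have ha'y : a' ≠ y := fun h => hyF (h ▸ ha'A.1)
    have hnta' : ¬ (edgeGraph Δ).Adj t a' := myNotAdj hΔ hF.1 ht.1 ha'A.1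
    have hnyy' : ¬ (edgeGraph Δ).Adj y y' := myNotAdj hΔ hH.1 hyH hy'H
    rcases Classical.em ((edgeGraph Δ).Adj t y') with h | h
    · exact ⟨y', a', Finset.mem_sdiff.mpr ⟨hy'H, hy'F⟩, ha'mem, ha't, h, ha'y'.symm⟩
    · rcases Classical.em ((edgeGraph Δ).Adj a' y) with h' | h'
      · exact ⟨y, a', hyB, ha'mem, ha't, hty, h'.symm⟩
      · exact absurd (myNo2K2 hchordal ha't.symm hyy' hty' ha'y hty ha'y'
          hnta' hnyy' h h') (fun hf => hf)

lemma myLemma2 {Δ : Finset (Finset (Fin n))} (hΔ : IsComplex Δ) (hpure : IsPure Δ)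
    (hclique : CliqueComplexProp Δ) (hconn : (edgeGraph Δ).Connected)
    (hpath : FourPathChord (edgeGraph Δ)) (hchordal : IsChordal (edgeGraph Δ)ᶜ)
    {F H : Finset (Fin n)} (hF : IsFacet Δ F) (hH : IsFacet Δ H)
    (hne : F ≠ H) (hint : (F ∩ H).Nonempty) :
    (F \ H).card = 1 ∧ (H \ F).card = 1 := by
  have hAne : (F \ H).Nonempty := by
    rw [Finset.sdiff_nonempty]
    exact fun hsub => hne (hF.2 H hH.1 hsub)
  have hBne : (H \ F).Nonempty := by
    rw [Finset.sdiff_nonempty]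
    exact fun hsub => hne.symm (hH.2 F hF.1 hsub)
  have hcards : (F \ H).card = (H \ F).card :=
    Finset.card_sdiff_comm (hpure F H hF hH)
  suffices hcard1 : (F \ H).card = 1 by
    exact ⟨hcard1, hcards ▸ hcard1⟩
  by_contra hcon
  have h2 : 2 ≤ (F \ H).card := by
    have := Finset.card_pos.mpr hAne
    omega
  have h2' : 2 ≤ (H \ F).card := hcards ▸ h2
  obtain ⟨z, hz⟩ := hint
  rw [Finset.mem_inter] at hz
  set T : Fin n → Prop := fun v => v ∈ F \ H ∨ v ∈ H \ F with hT
  have hstruct : ∀ t, T t → ∃ t₂ t₃, T t₂ ∧ T t₃ ∧ t ≠ t₃ ∧ t₂ ≠ t₃ ∧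
      (edgeGraph Δ).Adj t t₂ ∧ (edgeGraph Δ).Adj t₂ t₃ := by
    intro t hTt
    rcases hTt with htA | htB
    · obtain ⟨t₂, t₃, h2m, h3m, h3t, ha1, ha2⟩ :=
        myStructSide hΔ hclique hchordal hF hH h2 htA
      refine ⟨t₂, t₃, Or.inr h2m, Or.inl h3m, h3t.symm, ?_, ha1, ha2⟩
      rw [Finset.mem_sdiff] at h2m h3m
      exact fun h => h2m.2 (h ▸ h3m.1)
    · obtain ⟨t₂, t₃, h2m, h3m, h3t, ha1, ha2⟩ :=
        myStructSide hΔ hclique hchordal hH hF h2' htB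
      refine ⟨t₂, t₃, Or.inl h2m, Or.inr h3m, h3t.symm, ?_, ha1, ha2⟩
      rw [Finset.mem_sdiff] at h2m h3m
      exact fun h => h3m.2 (h ▸ h2m.1)
  refine myNoIsland hconn hpath T hstruct (z := z) (t0 := hAne.choose) ?_ ?_
    (Or.inl hAne.choose_spec)
  · rintro (h | h) <;> rw [Finset.mem_sdiff] at h
    · exact h.2 hz.2
    · exact h.2 hz.1
  · rintro t (h | h) <;> rw [Finset.mem_sdiff] at h
    · exact myNotAdj hΔ hF.1 hz.1 h.1
    · exact myNotAdj hΔ hH.1 hz.2 h.1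

end MyMain

section MyClaim

variable {n : ℕ}

lemma myClaim1 {Δ : Finset (Finset (Fin n))} (hΔ : IsComplex Δ) (hpure : IsPure Δ)
    (hcore : FullCore Δ) (hclique : CliqueComplexProp Δ)
    (hconn : (edgeGraph Δ).Connected) (hpath : FourPathChord (edgeGraph Δ))
    (hchordal : IsChordal (edgeGraph Δ)ᶜ) (hdim : ∃ F, IsFacet Δ F ∧ 3 ≤ F.card)
    {F G H : Finset (Fin n)} (hF : IsFacet Δ F) (hG : IsFacet Δ G) (hH : IsFacet Δ H)
    (hFG : F ≠ G) (hint : (F ∩ G).Nonempty) (hHF : H ≠ F) (hHG : H ≠ G)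
    (hmeet : (H ∩ F).Nonempty) : False := by
  obtain ⟨c1, c2⟩ := myLemma2 hΔ hpure hclique hconn hpath hchordal hF hG hFG hint
  obtain ⟨x, hxFG⟩ := Finset.card_eq_one.mp c1
  obtain ⟨y, hyGF⟩ := Finset.card_eq_one.mp c2
  have hxmem : x ∈ F \ G := by rw [hxFG]; exact Finset.mem_singleton_self x
  have hymem : y ∈ G \ F := by rw [hyGF]; exact Finset.mem_singleton_self y
  rw [Finset.mem_sdiff] at hxmem hymem
  -- dimension: |F ∩ G| ≥ 2
  obtain ⟨F₀, hF₀, h3⟩ := hdim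
  have hFcard : 3 ≤ F.card := (hpure F F₀ hF hF₀) ▸ h3
  have hsum : (F ∩ G).card + (F \ G).card = F.card := Finset.card_inter_add_card_sdiff F G
  have hS2 : 2 ≤ (F ∩ G).card := by omega
  -- Adj x y
  have hxy : (edgeGraph Δ).Adj x y := by
    obtain ⟨u, huF, huG, hadj⟩ := myExchange hΔ hclique hF hG.1 hymem.1 hymem.2
    have : u ∈ F \ G := Finset.mem_sdiff.mpr ⟨huF, huG⟩
    rw [hxFG, Finset.mem_singleton] at this
    exact (this ▸ hadj).symm
  -- F vs H
  have hintFH : (F ∩ H).Nonempty := by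
    obtain ⟨v, hv⟩ := hmeet
    rw [Finset.mem_inter] at hv
    exact ⟨v, Finset.mem_inter.mpr ⟨hv.2, hv.1⟩⟩
  obtain ⟨d1, d2⟩ := myLemma2 hΔ hpure hclique hconn hpath hchordal hF hH
    (fun h => hHF h.symm) hintFH
  obtain ⟨a, haFH⟩ := Finset.card_eq_one.mp d1
  obtain ⟨b, hbHF⟩ := Finset.card_eq_one.mp d2
  have hamem : a ∈ F \ H := by rw [haFH]; exact Finset.mem_singleton_self a
  have hbmem : b ∈ H \ F := by rw [hbHF]; exact Finset.mem_singleton_self b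
  rw [Finset.mem_sdiff] at hamem hbmem
  -- generic: anything in F other than a is in H
  have hFsubH : ∀ u ∈ F, u ≠ a → u ∈ H := by
    intro u huF hua
    by_contra huH
    have : u ∈ F \ H := Finset.mem_sdiff.mpr ⟨huF, huH⟩
    rw [haFH, Finset.mem_singleton] at this
    exact hua this
  have hFsubG : ∀ u ∈ F, u ≠ x → u ∈ G := by
    intro u huF hux
    by_contra huG
    have : u ∈ F \ G := Finset.mem_sdiff.mpr ⟨huF, huG⟩
    rw [hxFG, Finset.mem_singleton] at this
    exact hux this
  by_cases haG : a ∈ G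
  · -- case a ∈ S : contradiction via |H \ G| = 1
    have hxa : x ≠ a := fun h => hxmem.2 (h ▸ haG)
    have hxH : x ∈ H := hFsubH x hxmem.1 hxa
    -- H ∩ G nonempty
    obtain ⟨s, hsFG, hsa⟩ := Finset.exists_mem_ne hS2 a
    rw [Finset.mem_inter] at hsFG
    have hsH : s ∈ H := hFsubH s hsFG.1 hsa
    have hintGH : (G ∩ H).Nonempty := ⟨s, Finset.mem_inter.mpr ⟨hsFG.2, hsH⟩⟩
    obtain ⟨e1, e2⟩ := myLemma2 hΔ hpure hclique hconn hpath hchordal hG hH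
      (fun h => hHG h.symm) hintGH
    obtain ⟨c, hcHG⟩ := Finset.card_eq_one.mp e2
    have hbG : b ∉ G := by
      intro hbG
      have : b ∈ G \ F := Finset.mem_sdiff.mpr ⟨hbG, hbmem.2⟩
      rw [hyGF, Finset.mem_singleton] at this
      subst this
      exact myNotAdj hΔ hH.1 hxH hbmem.1 hxy
    have hxc : x = c := by
      have : x ∈ H \ G := Finset.mem_sdiff.mpr ⟨hxH, hxmem.2⟩
      rw [hcHG, Finset.mem_singleton] at this; exact this
    have hbc : b = c := by
      have : b ∈ H \ G := Finset.mem_sdiff.mpr ⟨hbmem.1, hbG⟩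
      rw [hcHG, Finset.mem_singleton] at this; exact this
    exact hbmem.2 ((hbc.trans hxc.symm) ▸ hxmem.1)
  · -- case a = x : triangle x, y, b
    have hax : x = a := by
      have : a ∈ F \ G := Finset.mem_sdiff.mpr ⟨hamem.1, haG⟩
      rw [hxFG, Finset.mem_singleton] at this; exact this.symm
    subst hax
    -- F \ {a} ⊆ H ∩ G
    have hby : b ≠ y := by
      intro hby
      apply hHG.symm
      apply hG.2 H hH.1
      intro u huG
      by_cases huF : u ∈ F
      · exact hFsubH u huF (fun h => hxmem.2 (h ▸ huG))
      · have : u ∈ G \ F := Finset.mem_sdiff.mpr ⟨huG, huF⟩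
        rw [hyGF, Finset.mem_singleton] at this
        exact this ▸ (hby ▸ hbmem.1)
    have hbG : b ∉ G := by
      intro hbG
      have : b ∈ G \ F := Finset.mem_sdiff.mpr ⟨hbG, hbmem.2⟩
      rw [hyGF, Finset.mem_singleton] at this
      exact hby this
    have hbx : (edgeGraph Δ).Adj b x := by
      obtain ⟨u, huF, huH, hadj⟩ := myExchange hΔ hclique hF hH.1 hbmem.1 hbmem.2
      have : u ∈ F \ H := Finset.mem_sdiff.mpr ⟨huF, huH⟩
      rw [haFH, Finset.mem_singleton] at this
      exact this ▸ hadj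
    have hyH : y ∉ H := by
      intro hyH
      have : y ∈ H \ F := Finset.mem_sdiff.mpr ⟨hyH, hymem.2⟩
      rw [hbHF, Finset.mem_singleton] at this
      exact hby this.symm
    have hyb : (edgeGraph Δ).Adj y b := by
      obtain ⟨u, huH, huG, hadj⟩ := myExchange hΔ hclique hH hG.1 hymem.1 hyH
      have huF : u ∉ F := by
        intro huF
        exact huG (hFsubG u huF (fun h => (h ▸ hamem.2) huH))
      have : u ∈ H \ F := Finset.mem_sdiff.mpr ⟨huH, huF⟩
      rw [hbHF, Finset.mem_singleton] at this
      exact this ▸ hadj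
    -- the triangle
    have hxney : x ≠ y := hxy.ne
    have hxneb : x ≠ b := fun h => hbmem.2 (h ▸ hxmem.1)
    have hyneb : y ≠ b := fun h => hbG (h ▸ hymem.1)
    set T : Fin n → Prop := fun v => v = x ∨ v = y ∨ v = b with hT
    have hstruct : ∀ t, T t → ∃ t₂ t₃, T t₂ ∧ T t₃ ∧ t ≠ t₃ ∧ t₂ ≠ t₃ ∧
        (edgeGraph Δ).Adj t t₂ ∧ (edgeGraph Δ).Adj t₂ t₃ := by
      rintro t (rfl | rfl | rfl)
      · exact ⟨y, b, Or.inr (Or.inl rfl), Or.inr (Or.inr rfl), hxneb, hyneb, hxy, hyb⟩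
      · exact ⟨x, b, Or.inl rfl, Or.inr (Or.inr rfl), hyneb, hxneb, hxy.symm, hbx.symm⟩
      · exact ⟨x, y, Or.inl rfl, Or.inr (Or.inl rfl), hyneb.symm, hxney, hbx, hxy⟩
    obtain ⟨z, hz⟩ := hint
    rw [Finset.mem_inter] at hz
    have hzH : z ∈ H := hFsubH z hz.1 (fun h => hxmem.2 (h ▸ hz.2))
    refine myNoIsland hconn hpath T hstruct (z := z) (t0 := x) ?_ ?_ (Or.inl rfl)
    · rintro (rfl | rfl | rfl)
      · exact hxmem.2 hz.2
      · exact hymem.2 hz.1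
      · exact hbG hz.2
    · rintro t (rfl | rfl | rfl)
      · exact myNotAdj hΔ hF.1 hz.1 hxmem.1
      · exact myNotAdj hΔ hG.1 hz.2 hymem.1
      · exact myNotAdj hΔ hH.1 hzH hbmem.1

end MyClaim

/-- in dimension `≥ 2`, no third facet meets a pair of intersecting
facets; consequently `Δ` is a disjoint union of single facets and pairs `(F,G)`
with `|F \ G| = |G \ F| = 1`. -/
theorem stmt4 (Δ : Finset (Finset (Fin n))) (hΔ : IsComplex Δ)
    (hpure : IsPure Δ) (hcore : FullCore Δ) (hclique : CliqueComplexProp Δ)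
    (hconn : (edgeGraph Δ).Connected) (hpath : FourPathChord (edgeGraph Δ))
    (hchordal : IsChordal (edgeGraph Δ)ᶜ)
    (hdim : ∃ F, IsFacet Δ F ∧ 3 ≤ F.card) :
    (∀ F G H : Finset (Fin n), IsFacet Δ F → IsFacet Δ G → IsFacet Δ H →
      F ≠ G → (F ∩ G).Nonempty → H ≠ F → H ≠ G → H ∩ (F ∪ G) = ∅) ∧
    (∀ F G : Finset (Fin n), IsFacet Δ F → IsFacet Δ G → F ≠ G → (F ∩ G).Nonempty →
      (F \ G).card = 1 ∧ (G \ F).card = 1) := by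
  constructor
  · intro F G H hF hG hH hFG hint hHF hHG
    rw [← Finset.not_nonempty_iff_eq_empty]
    rintro ⟨v, hv⟩
    rw [Finset.mem_inter, Finset.mem_union] at hv
    rcases hv.2 with hvF | hvG
    · exact myClaim1 hΔ hpure hcore hclique hconn hpath hchordal hdim hF hG hH hFG hint
        hHF hHG ⟨v, Finset.mem_inter.mpr ⟨hv.1, hvF⟩⟩
    · exact myClaim1 hΔ hpure hcore hclique hconn hpath hchordal hdim hG hF hH hFG.symm
        (by rwa [Finset.inter_comm]) hHG hHF ⟨v, Finset.mem_inter.mpr ⟨hv.1, hvG⟩⟩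
  · intro F G hF hG hne hint
    exact myLemma2 hΔ hpure hclique hconn hpath hchordal hF hG hne hint
end

section
/- Let $\Delta$ be a simplicial complex of dimension $d \geq 2$ on $[n]$ that is a disjoint union of subcomplexes of the following types: (type 1) $\langle F, G \rangle$ where $F, G$ are $d$-simplices with $F \cap G \neq \emptyset$ and $|F \setminus G| = |G \setminus F| = 1$; (type 2) $\langle H \rangle$ a single $d$-simplex; with at least two components. Then $\Delta$ is pure, $\mathrm{core}\,\Delta = \Delta$, all minimal non-faces of $\Delta$ have size 2, the edge graph $G_\Delta$ (the complement of the 1-skeleton) is connected, and every length-4 path in $G_\Delta$ with distinct endpoints has a chord from the first vertex to the third, fourth, or fifth vertex. -/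
open Finset

variable {n : ℕ}

section AuxStmt5

variable {d : ℕ} {Δ : Finset (Finset (Fin n))}

lemma pair_mem_of_facet (hΔ : IsComplex Δ) {F : Finset (Fin n)} (hF : F ∈ Δ)
    {i j : Fin n} (hi : i ∈ F) (hj : j ∈ F) : ({i, j} : Finset (Fin n)) ∈ Δ :=
  hΔ.1 F hF _ (by
    intro x hx
    simp only [Finset.mem_insert, Finset.mem_singleton] at hx
    rcases hx with rfl | rfl <;> assumption)

lemma third_facet (hstr : DisjointUnionStructure Δ d) {A B C : Finset (Fin n)}
    (hA : IsFacet Δ A) (hB : IsFacet Δ B) (hC : IsFacet Δ C)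
    (hAB : A ≠ B) {x : Fin n} (hxA : x ∈ A) (hxB : x ∈ B) {y : Fin n}
    (hyC : y ∈ C) (hyAB : y ∈ A ∪ B) : C = A ∨ C = B := by
  by_contra h
  push_neg at h
  have hemp := hstr.2.2.2 A B C hA hB hC hAB ⟨x, Finset.mem_inter.2 ⟨hxA, hxB⟩⟩ h.1 h.2
  have : y ∈ C ∩ (A ∪ B) := Finset.mem_inter.2 ⟨hyC, hyAB⟩
  rw [hemp] at this
  exact absurd this (Finset.notMem_empty y)

lemma sep_lemma (hd : 2 ≤ d) (hΔ : IsComplex Δ) (hstr : DisjointUnionStructure Δ d)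
    (htwo : ∃ F G, IsFacet Δ F ∧ IsFacet Δ G ∧ F ≠ G ∧ F ∩ G = ∅)
    (i j : Fin n) (hij : ({i, j} : Finset (Fin n)) ∈ Δ) :
    ∃ k, (edgeGraph Δ).Adj i k ∧ (edgeGraph Δ).Adj j k := by
  obtain ⟨F, hF, hsub⟩ := (hstr.1 _).1 hij
  have hiF : i ∈ F := hsub (by simp)
  have hjF : j ∈ F := hsub (by simp)
  obtain ⟨F₀, G₀, hF₀, hG₀, hne₀, hdisj₀⟩ := htwo
  have hcard : ∀ H, IsFacet Δ H → H.Nonempty := by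
    intro H hH
    apply Finset.card_pos.1
    rw [hstr.2.1 H hH]; omega
  by_cases hex : ∃ G, IsFacet Δ G ∧ G ≠ F ∧ (F ∩ G).Nonempty
  · obtain ⟨G, hG, hGF, hFG⟩ := hex
    have hpick : ∃ H, IsFacet Δ H ∧ H ≠ F ∧ H ≠ G := by
      by_cases h1 : F₀ ≠ F ∧ F₀ ≠ G
      · exact ⟨F₀, hF₀, h1⟩
      · push_neg at h1
        by_cases h2 : F₀ = F
        · refine ⟨G₀, hG₀, ?_, ?_⟩
          · rintro rfl; exact hne₀ h2
          · rintro rfl; exact hFG.ne_empty (h2 ▸ hdisj₀)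
        · have h3 : F₀ = G := h1 h2
          refine ⟨G₀, hG₀, ?_, ?_⟩
          · rintro rfl
            apply hFG.ne_empty
            rw [Finset.inter_comm, ← h3]
            exact hdisj₀
          · rintro rfl; exact hne₀ h3
    obtain ⟨H, hH, hHF, hHG⟩ := hpick
    have hHdis : H ∩ (F ∪ G) = ∅ :=
      hstr.2.2.2 F G H hF hG hH (Ne.symm hGF) hFG hHF hHG
    obtain ⟨k, hkH⟩ := hcard H hH
    have hkFG : k ∉ F ∪ G := by
      intro hk
      have : k ∈ H ∩ (F ∪ G) := Finset.mem_inter.2 ⟨hkH, hk⟩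
      rw [hHdis] at this
      exact absurd this (Finset.notMem_empty k)
    have key : ∀ x : Fin n, x ∈ F → (edgeGraph Δ).Adj x k := by
      intro x hxF
      refine ⟨?_, ?_⟩
      · rintro rfl; exact hkFG (Finset.mem_union_left _ hxF)
      · intro hmem
        obtain ⟨A, hA, hAsub⟩ := (hstr.1 _).1 hmem
        have hxA : x ∈ A := hAsub (by simp)
        have hkA : k ∈ A := hAsub (by simp)
        obtain ⟨z, hz⟩ := hFG
        rw [Finset.mem_inter] at hz
        rcases third_facet hstr hF hG hA (Ne.symm hGF) hz.1 hz.2 hxA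
            (Finset.mem_union_left _ hxF) with rfl | rfl
        · exact hkFG (Finset.mem_union_left _ hkA)
        · exact hkFG (Finset.mem_union_right _ hkA)
    exact ⟨k, key i hiF, key j hjF⟩
  · push_neg at hex
    have hdis : ∀ G, IsFacet Δ G → G ≠ F → F ∩ G = ∅ := by
      intro G hG hGF
      exact hex G hG hGF
    have hpick : ∃ H, IsFacet Δ H ∧ H ≠ F := by
      by_cases h2 : F₀ = F
      · exact ⟨G₀, hG₀, by rintro rfl; exact hne₀ h2⟩
      · exact ⟨F₀, hF₀, h2⟩
    obtain ⟨H, hH, hHF⟩ := hpick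
    obtain ⟨k, hkH⟩ := hcard H hH
    have hkF : k ∉ F := by
      intro hk
      have : k ∈ F ∩ H := Finset.mem_inter.2 ⟨hk, hkH⟩
      rw [hdis H hH hHF] at this
      exact absurd this (Finset.notMem_empty k)
    have key : ∀ x : Fin n, x ∈ F → (edgeGraph Δ).Adj x k := by
      intro x hxF
      refine ⟨?_, ?_⟩
      · rintro rfl; exact hkF hxF
      · intro hmem
        obtain ⟨A, hA, hAsub⟩ := (hstr.1 _).1 hmem
        have hxA : x ∈ A := hAsub (by simp)
        have hkA : k ∈ A := hAsub (by simp)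
        by_cases hAF : A = F
        · exact hkF (hAF ▸ hkA)
        · have : x ∈ F ∩ A := Finset.mem_inter.2 ⟨hxF, hxA⟩
          rw [hdis A hA hAF] at this
          exact absurd this (Finset.notMem_empty x)
    exact ⟨k, key i hiF, key j hjF⟩

end AuxStmt5

/-- a disjoint union (with at least two components) of `d`-simplices
and type-1 pairs, `d ≥ 2`, satisfies the combinatorial gCI conditions. -/
theorem stmt5 (d : ℕ) (hd : 2 ≤ d) (Δ : Finset (Finset (Fin n))) (hΔ : IsComplex Δ)
    (hstr : DisjointUnionStructure Δ d)
    (htwo : ∃ F G, IsFacet Δ F ∧ IsFacet Δ G ∧ F ≠ G ∧ F ∩ G = ∅) :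
    IsPure Δ ∧ FullCore Δ ∧ (∀ F, MinNonFace Δ F → F.card = 2) ∧
      (edgeGraph Δ).Connected ∧ FourPathChord (edgeGraph Δ) := by
  have hcard : ∀ H, IsFacet Δ H → H.Nonempty := by
    intro H hH
    apply Finset.card_pos.1
    rw [hstr.2.1 H hH]; omega
  refine ⟨?_, ?_, ?_, ?_, ?_⟩
  · -- Pure
    intro F G hF hG
    rw [hstr.2.1 F hF, hstr.2.1 G hG]
  · -- FullCore
    intro i
    have hpair : ({i, i} : Finset (Fin n)) ∈ Δ := by
      have := hΔ.2 i
      simpa using this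
    obtain ⟨k, hk, -⟩ := sep_lemma hd hΔ hstr htwo i i hpair
    exact ⟨k, Ne.symm hk.1, hk.2⟩
  · -- MinNonFace card 2
    rintro F ⟨hFnot, hFsub⟩
    obtain ⟨F₀, G₀, hF₀, -, -, -⟩ := htwo
    have h0 : F.Nonempty := by
      rcases Finset.eq_empty_or_nonempty F with rfl | h
      · exact absurd (hΔ.1 F₀ hF₀.1 ∅ (Finset.empty_subset _)) hFnot
      · exact h
    have h1 : F.card ≠ 1 := by
      intro h1
      obtain ⟨a, rfl⟩ := Finset.card_eq_one.1 h1
      exact hFnot (hΔ.2 a)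
    have h2 : F.card < 3 := by
      by_contra h2
      push_neg at h2
      obtain ⟨a, haF⟩ := h0
      have hc1 : 2 ≤ (F.erase a).card := by
        have := Finset.card_erase_of_mem haF; omega
      obtain ⟨b, hbE⟩ := Finset.card_pos.1 (by omega : 0 < (F.erase a).card)
      have hba : b ≠ a := (Finset.mem_erase.1 hbE).1
      have hbF : b ∈ F := (Finset.mem_erase.1 hbE).2
      have hc2 : 1 ≤ ((F.erase a).erase b).card := by
        have := Finset.card_erase_of_mem hbE; omega
      obtain ⟨c, hcE⟩ := Finset.card_pos.1 hc2
      have hcb : c ≠ b := (Finset.mem_erase.1 hcE).1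
      have hca : c ≠ a := (Finset.mem_erase.1 ((Finset.mem_erase.1 hcE).2)).1
      have hcF : c ∈ F := (Finset.mem_erase.1 ((Finset.mem_erase.1 hcE).2)).2
      have herase : ∀ x, x ∈ F → F.erase x ∈ Δ := by
        intro x hx
        exact hFsub _ (Finset.erase_ssubset hx)
      obtain ⟨A, hA, hAs⟩ := (hstr.1 _).1 (herase a haF)
      obtain ⟨B, hB, hBs⟩ := (hstr.1 _).1 (herase b hbF)
      obtain ⟨C, hC, hCs⟩ := (hstr.1 _).1 (herase c hcF)
      have hne : ∀ X Y : Finset (Fin n), X ∈ Δ → ∀ u v : Fin n, u ≠ v →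
          F.erase u ⊆ X → F.erase v ⊆ X → False := by
        intro X Y hX u v huv hu hv
        apply hFnot
        apply hΔ.1 X hX F
        intro x hx
        by_cases hxu : x = u
        · exact hv (Finset.mem_erase.2 ⟨hxu ▸ huv, hx⟩)
        · exact hu (Finset.mem_erase.2 ⟨hxu, hx⟩)
      have hAB : A ≠ B := by
        rintro rfl
        exact hne A A hA.1 a b (Ne.symm hba) hAs hBs
      have hCA : C ≠ A := by
        rintro rfl
        exact hne C C hC.1 c a hca hCs hAs
      have hCB : C ≠ B := by
        rintro rfl
        exact hne C C hC.1 c b hcb hCs hBs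
      have hcA : c ∈ A := hAs (Finset.mem_erase.2 ⟨hca, hcF⟩)
      have hcB : c ∈ B := hBs (Finset.mem_erase.2 ⟨hcb, hcF⟩)
      have hbC : b ∈ C := hCs (Finset.mem_erase.2 ⟨Ne.symm hcb, hbF⟩)
      have hbA : b ∈ A := hAs (Finset.mem_erase.2 ⟨hba, hbF⟩)
      rcases third_facet hstr hA hB hC hAB hcA hcB hbC
          (Finset.mem_union_left _ hbA) with h | h
      · exact hCA h
      · exact hCB h
    have h0' : 0 < F.card := Finset.card_pos.2 h0
    omega
  · -- Connected
    rw [SimpleGraph.connected_iff]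
    refine ⟨?_, ?_⟩
    · intro i j
      by_cases hij : ({i, j} : Finset (Fin n)) ∈ Δ
      · obtain ⟨k, h1, h2⟩ := sep_lemma hd hΔ hstr htwo i j hij
        exact h1.reachable.trans h2.symm.reachable
      · by_cases hej : i = j
        · subst hej; rfl
        · exact SimpleGraph.Adj.reachable ⟨hej, hij⟩
    · obtain ⟨F₀, -, hF₀, -⟩ := htwo
      obtain ⟨v, -⟩ := hcard F₀ hF₀
      exact ⟨v⟩
  · -- FourPathChord
    intro i₁ i₂ i₃ i₄ i₅ hnd h12 h23 h34 h45
    by_contra hcon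
    push_neg at hcon
    obtain ⟨hc3, hc4, hc5⟩ := hcon
    simp only [List.nodup_cons, List.mem_cons, List.mem_singleton,
      List.not_mem_nil, or_false, List.nodup_nil, and_true] at hnd
    push_neg at hnd
    have h13 : i₁ ≠ i₃ := hnd.1.2.1
    have h14 : i₁ ≠ i₄ := hnd.1.2.2.1
    have h15 : i₁ ≠ i₅ := hnd.1.2.2.2
    have h35 : i₃ ≠ i₅ := hnd.2.2.1.2
    have hmem : ∀ x : Fin n, i₁ ≠ x → ¬(edgeGraph Δ).Adj i₁ x →
        ({i₁, x} : Finset (Fin n)) ∈ Δ := by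
      intro x hx hadj
      by_contra hm
      exact hadj ⟨hx, hm⟩
    obtain ⟨A, hA, hAs⟩ := (hstr.1 _).1 (hmem i₃ h13 hc3)
    obtain ⟨B, hB, hBs⟩ := (hstr.1 _).1 (hmem i₄ h14 hc4)
    obtain ⟨C, hC, hCs⟩ := (hstr.1 _).1 (hmem i₅ h15 hc5)
    have h1A : i₁ ∈ A := hAs (by simp)
    have h3A : i₃ ∈ A := hAs (by simp)
    have h1B : i₁ ∈ B := hBs (by simp)
    have h4B : i₄ ∈ B := hBs (by simp)
    have h1C : i₁ ∈ C := hCs (by simp)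
    have h5C : i₅ ∈ C := hCs (by simp)
    have hAB : A ≠ B := by
      rintro rfl
      exact h34.2 (pair_mem_of_facet hΔ hA.1 h3A h4B)
    rcases third_facet hstr hA hB hC hAB h1A h1B h1C
        (Finset.mem_union_left _ h1A) with h | h
    · -- C = A : i₅ ∈ A
      rw [h] at h5C
      have h3B : i₃ ∉ B := fun h => h34.2 (pair_mem_of_facet hΔ hB.1 h h4B)
      have h5B : i₅ ∉ B := fun h => h45.2 (pair_mem_of_facet hΔ hB.1 h4B h)
      obtain ⟨hcard1, -⟩ := hstr.2.2.1 A B hA hB hAB ⟨i₁, Finset.mem_inter.2 ⟨h1A, h1B⟩⟩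
      obtain ⟨x, hx⟩ := Finset.card_eq_one.1 hcard1
      have h3 : i₃ ∈ A \ B := Finset.mem_sdiff.2 ⟨h3A, h3B⟩
      have h5 : i₅ ∈ A \ B := Finset.mem_sdiff.2 ⟨h5C, h5B⟩
      rw [hx, Finset.mem_singleton] at h3 h5
      exact h35 (h3.trans h5.symm)
    · -- C = B : i₅ ∈ B
      rw [h] at h5C
      exact h45.2 (pair_mem_of_facet hΔ hB.1 h4B h5C)
end

section
/- Let $\Delta$ be a pure 1-dimensional simplicial complex (a graph) on $[n]$ with $\mathrm{core}\,\Delta = \Delta$, such that $\Delta$ is the clique complex of its 1-skeleton, the complement graph $G_\Delta$ is connected, the complement of $G_\Delta$ (i.e., $\Delta_1$) is chordal, and every 4-path in $G_\Delta$ with distinct endpoints has a chord from the first vertex to the 3rd, 4th, or 5th vertex. Then $\Delta$ is a disjoint union of paths. -/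
open Finset

variable {n : ℕ}

section AuxProof

variable {n : ℕ}

lemma compl_edgeGraph_adj {Δ : Finset (Finset (Fin n))} {i j : Fin n} :
    (edgeGraph Δ)ᶜ.Adj i j ↔ i ≠ j ∧ ({i, j} : Finset (Fin n)) ∈ Δ := by
  rw [SimpleGraph.compl_adj]
  constructor
  · rintro ⟨hij, h⟩
    refine ⟨hij, ?_⟩
    by_contra hc
    exact h ⟨hij, hc⟩
  · rintro ⟨hij, h⟩
    exact ⟨hij, fun hG => hG.2 h⟩

lemma face_card_le_two {Δ : Finset (Finset (Fin n))}
    (hdim : ∀ F, IsFacet Δ F → F.card = 2) {s : Finset (Fin n)} (hs : s ∈ Δ) :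
    s.card ≤ 2 := by
  obtain ⟨F, hF, hmax⟩ := Finset.exists_max_image (Δ.filter fun t => s ⊆ t) Finset.card
    ⟨s, Finset.mem_filter.mpr ⟨hs, Finset.Subset.refl s⟩⟩
  rw [Finset.mem_filter] at hF
  have hfacet : IsFacet Δ F := by
    refine ⟨hF.1, fun G hG hFG => Finset.eq_of_subset_of_card_le hFG ?_⟩
    exact hmax G (Finset.mem_filter.mpr ⟨hG, hF.2.trans hFG⟩)
  calc s.card ≤ F.card := Finset.card_le_card hF.2
    _ = 2 := hdim F hfacet

lemma no_triangle {Δ : Finset (Finset (Fin n))}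
    (hdim : ∀ F, IsFacet Δ F → F.card = 2) (hclique : CliqueComplexProp Δ)
    {x y z : Fin n} (h1 : (edgeGraph Δ)ᶜ.Adj x y) (h2 : (edgeGraph Δ)ᶜ.Adj y z)
    (h3 : (edgeGraph Δ)ᶜ.Adj x z) : False := by
  rw [compl_edgeGraph_adj] at h1 h2 h3
  have hF : ({x, y, z} : Finset (Fin n)) ∈ Δ := by
    rw [hclique]
    intro i hi j hj hij
    simp only [Finset.mem_insert, Finset.mem_singleton] at hi hj
    rcases hi with rfl | rfl | rfl <;> rcases hj with rfl | rfl | rfl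
    · exact absurd rfl hij
    · exact h1.2
    · exact h3.2
    · rw [Finset.pair_comm]; exact h1.2
    · exact absurd rfl hij
    · exact h2.2
    · rw [Finset.pair_comm]; exact h3.2
    · rw [Finset.pair_comm]; exact h2.2
    · exact absurd rfl hij
  have hcard : ({x, y, z} : Finset (Fin n)).card = 3 :=
    Finset.card_eq_three.mpr ⟨x, y, z, h1.1, h3.1, h2.1, rfl⟩
  have := face_card_le_two hdim hF
  omega

lemma maxdeg_aux {Δ : Finset (Finset (Fin n))}
    (hdim : ∀ F, IsFacet Δ F → F.card = 2) (hclique : CliqueComplexProp Δ)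
    (hconn : (edgeGraph Δ).Connected) (hpath : FourPathChord (edgeGraph Δ)) :
    ∀ v a b c : Fin n, (edgeGraph Δ)ᶜ.Adj v a → (edgeGraph Δ)ᶜ.Adj v b →
      (edgeGraph Δ)ᶜ.Adj v c → (a = b ∨ a = c ∨ b = c) := by
  intro v a b c hva hvb hvc
  by_contra hcon
  push_neg at hcon
  obtain ⟨hab, hac, hbc⟩ := hcon
  have Gab : (edgeGraph Δ).Adj a b :=
    ⟨hab, fun hm => no_triangle hdim hclique hva (compl_edgeGraph_adj.mpr ⟨hab, hm⟩) hvb⟩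
  have Gac : (edgeGraph Δ).Adj a c :=
    ⟨hac, fun hm => no_triangle hdim hclique hva (compl_edgeGraph_adj.mpr ⟨hac, hm⟩) hvc⟩
  have Gbc : (edgeGraph Δ).Adj b c :=
    ⟨hbc, fun hm => no_triangle hdim hclique hvb (compl_edgeGraph_adj.mpr ⟨hbc, hm⟩) hvc⟩
  have key : ∀ (u z : Fin n) (w : (edgeGraph Δ).Walk u z), z = a → ¬(edgeGraph Δ).Adj u a →
      ¬(edgeGraph Δ).Adj u b → ¬(edgeGraph Δ).Adj u c →
      u ≠ a → u ≠ b → u ≠ c → False := by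
    intro u z w
    induction w with
    | nil => intro hz _ _ _ h _ _; exact h hz
    | @cons u x _ h p ih =>
      intro hz nua nub nuc hua hub huc
      have hux : u ≠ x := h.1
      by_cases hxa : x = a
      · exact nua (hxa ▸ h)
      by_cases hxb : x = b
      · exact nub (hxb ▸ h)
      by_cases hxc : x = c
      · exact nuc (hxc ▸ h)
      by_cases gxa : (edgeGraph Δ).Adj x a
      · have hnd : ([u, x, a, b, c] : List (Fin n)).Nodup := by
          simp [hux, hua, hub, huc, hxa, hxb, hxc, hab, hac, hbc, hab.symm, hac.symm, hbc.symm]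
        rcases hpath u x a b c hnd h gxa Gab Gbc with h' | h' | h'
        exacts [nua h', nub h', nuc h']
      by_cases gxb : (edgeGraph Δ).Adj x b
      · have hnd : ([u, x, b, a, c] : List (Fin n)).Nodup := by
          simp [hux, hua, hub, huc, hxa, hxb, hxc, hab, hac, hbc, hab.symm, hac.symm, hbc.symm]
        rcases hpath u x b a c hnd h gxb Gab.symm Gac with h' | h' | h'
        exacts [nub h', nua h', nuc h']
      by_cases gxc : (edgeGraph Δ).Adj x c
      · have hnd : ([u, x, c, a, b] : List (Fin n)).Nodup := by
          simp [hux, hua, hub, huc, hxa, hxb, hxc, hab, hac, hbc, hab.symm, hac.symm, hbc.symm]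
        rcases hpath u x c a b hnd h gxc Gac.symm Gab with h' | h' | h'
        exacts [nuc h', nua h', nub h']
      · exact ih hz gxa gxb gxc hxa hxb hxc
  obtain ⟨w⟩ := hconn.preconnected v a
  obtain ⟨hva1, hva2⟩ := (SimpleGraph.compl_adj _ _ _).mp hva
  obtain ⟨hvb1, hvb2⟩ := (SimpleGraph.compl_adj _ _ _).mp hvb
  obtain ⟨hvc1, hvc2⟩ := (SimpleGraph.compl_adj _ _ _).mp hvc
  exact key v a w rfl hva2 hvb2 hvc2 hva1 hvb1 hvc1

end AuxProof

/-- the 1-dimensional case — the complex is a disjoint union of paths,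
i.e. its 1-skeleton has maximum degree at most 2 and is acyclic. -/
theorem stmt7 (Δ : Finset (Finset (Fin n))) (hΔ : IsComplex Δ) (hpure : IsPure Δ)
    (hdim : ∀ F, IsFacet Δ F → F.card = 2) (hne : ∃ F, IsFacet Δ F)
    (hcore : FullCore Δ) (hclique : CliqueComplexProp Δ)
    (hconn : (edgeGraph Δ).Connected) (hchordal : IsChordal (edgeGraph Δ)ᶜ)
    (hpath : FourPathChord (edgeGraph Δ)) :
    (∀ v a b c : Fin n, (edgeGraph Δ)ᶜ.Adj v a → (edgeGraph Δ)ᶜ.Adj v b →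
      (edgeGraph Δ)ᶜ.Adj v c → (a = b ∨ a = c ∨ b = c)) ∧
    (edgeGraph Δ)ᶜ.IsAcyclic := by
  have maxdeg := maxdeg_aux hdim hclique hconn hpath
  refine ⟨maxdeg, ?_⟩
  intro v w hcyc
  have hlen3 : 3 ≤ w.length := hcyc.three_le_length
  rcases Nat.lt_or_ge 3 w.length with hlt | hge
  · -- length > 3 : use the chord
    obtain ⟨a, b, haS, hbS, hadj, hne⟩ := hchordal v w hcyc hlt
    set c := w.rotate a haS with hcdef
    have hc : c.IsCycle := hcyc.rotate haS
    have hmem : ∀ e, e ∈ c.edges ↔ e ∈ w.edges := fun e => (w.rotate_edges a haS).mem_iff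
    have hclen : 3 ≤ c.length := hc.three_le_length
    have hcnil : ¬c.Nil := by rw [SimpleGraph.Walk.not_nil_iff_lt_length]; omega
    obtain ⟨x, h1, p, hp⟩ := SimpleGraph.Walk.not_nil_iff.mp hcnil
    have hrnil : ¬c.reverse.Nil := by
      rw [SimpleGraph.Walk.not_nil_iff_lt_length, SimpleGraph.Walk.length_reverse]; omega
    obtain ⟨y, h2, q, hq⟩ := SimpleGraph.Walk.not_nil_iff.mp hrnil
    have e1 : s(a, x) ∈ c.edges := by rw [hp]; simp
    have e2 : s(a, y) ∈ c.edges := by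
      have h' : s(a, y) ∈ c.reverse.edges := by rw [hq]; simp
      rwa [SimpleGraph.Walk.edges_reverse, List.mem_reverse] at h'
    have hnodup : c.edges.Nodup := hc.isCircuit.isTrail.edges_nodup
    have hxy : x ≠ y := by
      intro hxyeq
      subst hxyeq
      have hce : c.edges = s(a, x) :: p.edges := by rw [hp]; simp
      have hrev : c.reverse.edges = s(a, x) :: q.edges := by rw [hq]; simp
      have hcr : c.edges = q.edges.reverse ++ [s(a, x)] := by
        rw [← List.reverse_reverse c.edges, ← SimpleGraph.Walk.edges_reverse, hrev,
          List.reverse_cons]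
      have hql : c.length = q.length + 1 := by
        have hlq := congrArg SimpleGraph.Walk.length hq
        rw [SimpleGraph.Walk.length_reverse] at hlq
        rw [hlq, SimpleGraph.Walk.length_cons]
      cases hqe : q.edges.reverse with
      | nil =>
        have hq0 := congrArg List.length hqe
        rw [List.length_reverse, SimpleGraph.Walk.length_edges, List.length_nil] at hq0
        omega
      | cons f t =>
        have heq : s(a, x) :: p.edges = q.edges.reverse ++ [s(a, x)] := hce.symm.trans hcr
        rw [hqe, List.cons_append] at heq
        injection heq with hf hrest
        have hmem' : s(a, x) ∈ p.edges := by rw [hrest]; simp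
        rw [hce] at hnodup
        exact (List.nodup_cons.mp hnodup).1 hmem'
    have hbx : b ≠ x := by rintro rfl; exact hne ((hmem _).mp e1)
    have hby : b ≠ y := by rintro rfl; exact hne ((hmem _).mp e2)
    rcases maxdeg a x y b h1 h2 hadj with h' | h' | h'
    exacts [hxy h', hbx h'.symm, hby h'.symm]
  · -- length = 3 : triangle
    have hlen : w.length = 3 := le_antisymm hge hlen3
    have hnil1 : ¬w.Nil := by rw [SimpleGraph.Walk.not_nil_iff_lt_length]; omega
    obtain ⟨x, h1, p1, rfl⟩ := SimpleGraph.Walk.not_nil_iff.mp hnil1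
    rw [SimpleGraph.Walk.length_cons] at hlen
    have hnil2 : ¬p1.Nil := by rw [SimpleGraph.Walk.not_nil_iff_lt_length]; omega
    obtain ⟨y, h2, p2, rfl⟩ := SimpleGraph.Walk.not_nil_iff.mp hnil2
    rw [SimpleGraph.Walk.length_cons] at hlen
    have hnil3 : ¬p2.Nil := by rw [SimpleGraph.Walk.not_nil_iff_lt_length]; omega
    obtain ⟨z, h3, p3, rfl⟩ := SimpleGraph.Walk.not_nil_iff.mp hnil3
    rw [SimpleGraph.Walk.length_cons] at hlen
    have hzv : z = v := p3.eq_of_length_eq_zero (by omega)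
    subst hzv
    exact no_triangle hdim hclique h1 h2 h3.symm
end

section
/- Let $\Delta$ be a pure simplicial complex on $[n]$ with $\mathrm{core}\,\Delta = \Delta$ whose Stanley–Reisner ideal $I_\Delta$ is matroidal of degree 2 and such that $K[\Delta]$ is Buchsbaum (equivalently, the gCI combinatorial conditions hold). Then $\Delta$ is a disjoint union of $d$-simplices where $d = \dim \Delta$: no two distinct facets of $\Delta$ intersect. -/
open Finset

variable {n : ℕ}

/-- a matroidal Buchsbaum (gCI) Stanley–Reisner complex is a
disjoint union of simplices: no two distinct facets intersect. -/
theorem stmt10 (Δ : Finset (Finset (Fin n))) (hΔ : IsComplex Δ) (hpure : IsPure Δ)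
    (hcore : FullCore Δ) (hclique : CliqueComplexProp Δ)
    (hmatroid : ExchangeProp (edgeGraph Δ))
    (hgCI : ∀ F G, IsFacet Δ F → IsFacet Δ G → F ≠ G → (F ∩ G).Nonempty →
      ∃ i₁ ∈ F \ G, ∃ i₂ ∈ G \ F, (edgeGraph Δ).Adj i₁ i₂) :
    ∀ F G, IsFacet Δ F → IsFacet Δ G → F ≠ G → F ∩ G = ∅ := by
  intro F G hF hG hne
  by_contra hcap
  have hnon : (F ∩ G).Nonempty := Finset.nonempty_iff_ne_empty.mpr hcap
  obtain ⟨i₁, hi₁, i₂, hi₂, hadj⟩ := hgCI F G hF hG hne hnon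
  obtain ⟨v, hv⟩ := hnon
  have hvF : v ∈ F := (Finset.mem_inter.mp hv).1
  have hvG : v ∈ G := (Finset.mem_inter.mp hv).2
  obtain ⟨w, hwv, hwpair⟩ := hcore v
  -- w is not in F nor G
  have hwF : w ∉ F := fun hwF =>
    hwpair (hΔ.1 F hF.1 {v, w} (by intro x hx; rcases Finset.mem_insert.mp hx with h | h
                                   · exact h ▸ hvF
                                   · exact (Finset.mem_singleton.mp h) ▸ hwF))
  have hwG : w ∉ G := fun hwG =>
    hwpair (hΔ.1 G hG.1 {v, w} (by intro x hx; rcases Finset.mem_insert.mp hx with h | h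
                                   · exact h ▸ hvG
                                   · exact (Finset.mem_singleton.mp h) ▸ hwG))
  have hi₁F : i₁ ∈ F := (Finset.mem_sdiff.mp hi₁).1
  have hi₂G : i₂ ∈ G := (Finset.mem_sdiff.mp hi₂).1
  have hadjwv : (edgeGraph Δ).Adj w v := ⟨hwv, by rwa [Finset.pair_comm]⟩
  have hwnot : w ∉ ({i₁, i₂} : Finset (Fin n)) := by
    intro hmem
    rcases Finset.mem_insert.mp hmem with h | h
    · exact hwF (h ▸ hi₁F)
    · exact hwG ((Finset.mem_singleton.mp h) ▸ hi₂G)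
  obtain ⟨k, hk, _, hadjvk⟩ := hmatroid w v i₁ i₂ hadjwv hadj hwnot
  -- but v is adjacent to neither i₁ nor i₂, since {v,k} ⊆ F or ⊆ G is a face
  rcases Finset.mem_insert.mp hk with h | h
  · exact hadjvk.2 (hΔ.1 F hF.1 {v, k}
      (by intro x hx; rcases Finset.mem_insert.mp hx with h' | h'
          · exact h' ▸ hvF
          · exact (Finset.mem_singleton.mp h') ▸ h ▸ hi₁F))
  · have h := Finset.mem_singleton.mp h
    exact hadjvk.2 (hΔ.1 G hG.1 {v, k}
      (by intro x hx; rcases Finset.mem_insert.mp hx with h' | h'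
          · exact h' ▸ hvG
          · exact (Finset.mem_singleton.mp h') ▸ h ▸ hi₂G))
end

section
/- Let $G$ be a graph on $[n]$ whose complement is a disjoint union of paths. Then $G$ is connected whenever $n \geq 4$ and the complement has at least 2 components or a component that is a path of length at least 1; moreover, every path of length 4 in $G$ with distinct endpoints $i_1, i_5$ admits a chord $\{i_1, i_q\} \in G$ for some $q \in \{3,4,5\}$. -/
open Finset

variable {n : ℕ}

/-- if the complement of `G` is a disjoint union of paths (max
degree `≤ 2` and acyclic), then `G` is connected whenever `n ≥ 4` and the
complement is disconnected or has an edge; moreover `G` satisfies the 4-path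
chord condition. -/
theorem stmt16 (G : SimpleGraph (Fin n))
    (hdeg : ∀ v a b c : Fin n, Gᶜ.Adj v a → Gᶜ.Adj v b → Gᶜ.Adj v c →
      (a = b ∨ a = c ∨ b = c))
    (hacyc : Gᶜ.IsAcyclic) :
    (4 ≤ n →
      ((∃ u v : Fin n, ¬ Gᶜ.Reachable u v) ∨ ∃ u v : Fin n, Gᶜ.Adj u v) →
      G.Connected) ∧
    FourPathChord G := by
  classical
  constructor
  · intro hn _
    have hne : Nonempty (Fin n) := ⟨⟨0, by omega⟩⟩
    rw [SimpleGraph.connected_iff]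
    refine ⟨fun u v => ?_, hne⟩
    by_cases huv : u = v
    · subst huv; exact SimpleGraph.Reachable.refl u
    by_cases hadj : G.Adj u v
    · exact hadj.reachable
    have hc : Gᶜ.Adj u v := by rw [SimpleGraph.compl_adj]; exact ⟨huv, hadj⟩
    by_cases hmid : ∃ w, w ≠ u ∧ w ≠ v ∧ ¬ Gᶜ.Adj u w ∧ ¬ Gᶜ.Adj v w
    · obtain ⟨w, hwu, hwv, h1, h2⟩ := hmid
      have g1 : G.Adj u w := by
        by_contra h; exact h1 (by rw [SimpleGraph.compl_adj]; exact ⟨Ne.symm hwu, h⟩)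
      have g2 : G.Adj v w := by
        by_contra h; exact h2 (by rw [SimpleGraph.compl_adj]; exact ⟨Ne.symm hwv, h⟩)
      exact g1.reachable.trans g2.symm.reachable
    · push_neg at hmid
      -- every vertex outside {u, v} is a Gᶜ-neighbor of u or of v
      set Nu : Finset (Fin n) := univ.filter (fun w => w ≠ u ∧ w ≠ v ∧ Gᶜ.Adj u w) with hNu
      set Nv : Finset (Fin n) := univ.filter (fun w => w ≠ u ∧ w ≠ v ∧ Gᶜ.Adj v w) with hNv
      have hNuc : Nu.card ≤ 1 := by
        rw [Finset.card_le_one]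
        intro a ha b hb
        rw [hNu, Finset.mem_filter] at ha hb
        rcases hdeg u v a b hc ha.2.2.2 hb.2.2.2 with h | h | h
        · exact absurd h.symm ha.2.2.1
        · exact absurd h.symm hb.2.2.1
        · exact h
      have hNvc : Nv.card ≤ 1 := by
        rw [Finset.card_le_one]
        intro a ha b hb
        rw [hNv, Finset.mem_filter] at ha hb
        rcases hdeg v u a b hc.symm ha.2.2.2 hb.2.2.2 with h | h | h
        · exact absurd h.symm ha.2.1
        · exact absurd h.symm hb.2.1
        · exact h
      have hS : (univ \ {u, v} : Finset (Fin n)) ⊆ Nu ∪ Nv := by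
        intro w hw
        simp only [Finset.mem_sdiff, Finset.mem_insert, Finset.mem_singleton] at hw
        push_neg at hw
        obtain ⟨-, hwu, hwv⟩ := hw
        by_cases h : Gᶜ.Adj u w
        · exact Finset.mem_union_left _
            (Finset.mem_filter.mpr ⟨Finset.mem_univ w, hwu, hwv, h⟩)
        · exact Finset.mem_union_right _
            (Finset.mem_filter.mpr ⟨Finset.mem_univ w, hwu, hwv, hmid w hwu hwv h⟩)
      have hScard : 2 ≤ (univ \ {u, v} : Finset (Fin n)).card := by
        have h1 : ({u, v} : Finset (Fin n)).card = 2 := Finset.card_pair huv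
        have h2 : (univ \ {u, v} : Finset (Fin n)).card
            = n - ({u, v} : Finset (Fin n)).card := by
          rw [Finset.card_sdiff_of_subset (Finset.subset_univ _)]; simp
        omega
      have hUnion : 2 ≤ (Nu ∪ Nv).card := le_trans hScard (Finset.card_le_card hS)
      have hUB : (Nu ∪ Nv).card ≤ Nu.card + Nv.card := Finset.card_union_le _ _
      have hNune : Nu.Nonempty := by rw [← Finset.card_pos]; omega
      have hNvne : Nv.Nonempty := by rw [← Finset.card_pos]; omega
      obtain ⟨w₁, hw₁⟩ := hNune
      obtain ⟨w₂, hw₂⟩ := hNvne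
      rw [hNu, Finset.mem_filter] at hw₁
      rw [hNv, Finset.mem_filter] at hw₂
      obtain ⟨-, hw₁u, hw₁v, hw₁a⟩ := hw₁
      obtain ⟨-, hw₂u, hw₂v, hw₂a⟩ := hw₂
      -- no vertex is a Gᶜ-neighbor of both u and v
      have hsep : ∀ x : Fin n, x ≠ u → x ≠ v → ¬ (Gᶜ.Adj u x ∧ Gᶜ.Adj v x) := by
        rintro x hxu hxv ⟨ha, hb⟩
        have hxNu : x ∈ Nu := Finset.mem_filter.mpr ⟨Finset.mem_univ x, hxu, hxv, ha⟩
        have hxNv : x ∈ Nv := Finset.mem_filter.mpr ⟨Finset.mem_univ x, hxu, hxv, hb⟩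
        obtain ⟨y, hy, hyx⟩ := Finset.exists_mem_ne (by omega : 1 < (Nu ∪ Nv).card) x
        rcases Finset.mem_union.mp hy with h | h
        · exact hyx ((Finset.card_le_one.mp hNuc) y h x hxNu)
        · exact hyx ((Finset.card_le_one.mp hNvc) y h x hxNv)
      have hvw₁ : ¬ Gᶜ.Adj v w₁ := fun h => hsep w₁ hw₁u hw₁v ⟨hw₁a, h⟩
      have huw₂ : ¬ Gᶜ.Adj u w₂ := fun h => hsep w₂ hw₂u hw₂v ⟨h, hw₂a⟩
      have hw12 : w₁ ≠ w₂ := fun h => huw₂ (h ▸ hw₁a)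
      have g1 : G.Adj v w₁ := by
        by_contra h; exact hvw₁ (by rw [SimpleGraph.compl_adj]; exact ⟨Ne.symm hw₁v, h⟩)
      have g2 : G.Adj u w₂ := by
        by_contra h; exact huw₂ (by rw [SimpleGraph.compl_adj]; exact ⟨Ne.symm hw₂u, h⟩)
      have g3 : G.Adj w₁ w₂ := by
        by_contra h
        have hcw : Gᶜ.Adj w₁ w₂ := by rw [SimpleGraph.compl_adj]; exact ⟨hw12, h⟩
        have hp1 : (SimpleGraph.Walk.cons hc
            (SimpleGraph.Walk.cons hw₂a SimpleGraph.Walk.nil)).IsPath := by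
          simp [SimpleGraph.Walk.isPath_def, huv, Ne.symm hw₂u, Ne.symm hw₂v]
        have hp2 : (SimpleGraph.Walk.cons hw₁a
            (SimpleGraph.Walk.cons hcw SimpleGraph.Walk.nil)).IsPath := by
          simp [SimpleGraph.Walk.isPath_def, Ne.symm hw₁u, Ne.symm hw₂u, hw12]
        have heq := hacyc.path_unique (⟨_, hp1⟩ : Gᶜ.Path u w₂) ⟨_, hp2⟩
        have heq' : (SimpleGraph.Walk.cons hc
            (SimpleGraph.Walk.cons hw₂a SimpleGraph.Walk.nil))
            = (SimpleGraph.Walk.cons hw₁a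
            (SimpleGraph.Walk.cons hcw SimpleGraph.Walk.nil)) := congrArg Subtype.val heq
        have hv1 : v ∈ (SimpleGraph.Walk.cons hc
            (SimpleGraph.Walk.cons hw₂a SimpleGraph.Walk.nil)).support := by simp
        rw [heq'] at hv1
        simp only [SimpleGraph.Walk.support_cons, SimpleGraph.Walk.support_nil,
          List.mem_cons, List.not_mem_nil, or_false] at hv1
        rcases hv1 with h' | h' | h'
        · exact huv h'.symm
        · exact hw₁v h'.symm
        · exact hw₂v h'.symm
      exact g2.reachable.trans (g3.symm.reachable.trans g1.symm.reachable)
  · intro i₁ i₂ i₃ i₄ i₅ hnd h12 h23 h34 h45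
    by_contra h
    push_neg at h
    obtain ⟨h3, h4, h5⟩ := h
    have e13 : i₁ ≠ i₃ := by intro e; subst e; simp at hnd
    have e14 : i₁ ≠ i₄ := by intro e; subst e; simp at hnd
    have e15 : i₁ ≠ i₅ := by intro e; subst e; simp at hnd
    have e34 : i₃ ≠ i₄ := by intro e; subst e; simp at hnd
    have e35 : i₃ ≠ i₅ := by intro e; subst e; simp at hnd
    have e45 : i₄ ≠ i₅ := by intro e; subst e; simp at hnd
    have c3 : Gᶜ.Adj i₁ i₃ := by rw [SimpleGraph.compl_adj]; exact ⟨e13, h3⟩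
    have c4 : Gᶜ.Adj i₁ i₄ := by rw [SimpleGraph.compl_adj]; exact ⟨e14, h4⟩
    have c5 : Gᶜ.Adj i₁ i₅ := by rw [SimpleGraph.compl_adj]; exact ⟨e15, h5⟩
    rcases hdeg i₁ i₃ i₄ i₅ c3 c4 c5 with h | h | h
    · exact e34 h
    · exact e35 h
    · exact e45 h
end

section
/- Let $\Delta$ be a pure simplicial complex on $[n]$ with $\mathrm{core}\,\Delta = \Delta$, which is the clique complex of its 1-skeleton, such that the edge graph $G_\Delta$ (complement of the 1-skeleton) is connected and satisfies the 4-path chord condition, and the 1-skeleton is chordal. If $F$ and $H$ are distinct intersecting facets witnessed by the unique cross-edge $\{i_1, i_2\} \in G_\Delta$ ($i_1 \in F \setminus H$, $i_2 \in H \setminus F$), then the set $W = (F \cup H) \setminus \{i_1, i_2\}$ is a face of $\Delta$. -/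
open Finset

variable {n : ℕ}

/-- given intersecting distinct facets `F, H` with unique cross
edge `{i₁, i₂}` of `G_Δ`, the set `W = (F ∪ H) \ {i₁, i₂}` is a face of `Δ`. -/
theorem stmt17 (Δ : Finset (Finset (Fin n))) (hΔ : IsComplex Δ)
    (hpure : IsPure Δ) (hcore : FullCore Δ) (hclique : CliqueComplexProp Δ)
    (hconn : (edgeGraph Δ).Connected) (hpath : FourPathChord (edgeGraph Δ))
    (hchordal : IsChordal (edgeGraph Δ)ᶜ)
    (F H : Finset (Fin n)) (hF : IsFacet Δ F) (hH : IsFacet Δ H)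
    (hne : F ≠ H) (hint : (F ∩ H).Nonempty)
    (i₁ i₂ : Fin n) (h₁ : i₁ ∈ F \ H) (h₂ : i₂ ∈ H \ F)
    (hadj : (edgeGraph Δ).Adj i₁ i₂)
    (huniq : ∀ j₁ ∈ F \ H, ∀ j₂ ∈ H \ F,
      (edgeGraph Δ).Adj j₁ j₂ → j₁ = i₁ ∧ j₂ = i₂) :
    (F ∪ H) \ {i₁, i₂} ∈ Δ := by
  rw [hclique]
  intro i hi j hj hij
  simp only [mem_sdiff, mem_union, mem_insert, mem_singleton, not_or] at hi hj
  -- helper: any pair inside a face is a face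
  have pair_face : ∀ (S : Finset (Fin n)), S ∈ Δ → ∀ a ∈ S, ∀ b ∈ S,
      ({a, b} : Finset (Fin n)) ∈ Δ := by
    intro S hS a ha b hb
    exact hΔ.1 S hS _ (by intro x hx; simp at hx; rcases hx with rfl | rfl <;> assumption)
  have key : ∀ a b : Fin n, a ∈ F → a ∉ H → a ≠ i₁ → b ∈ H → b ∉ F →
      ({a, b} : Finset (Fin n)) ∈ Δ := by
    intro a b haF haH hai₁ hbH hbF
    by_contra hab
    have hne' : a ≠ b := fun h => hbF (h ▸ haF)
    have := huniq a (mem_sdiff.2 ⟨haF, haH⟩) b (mem_sdiff.2 ⟨hbH, hbF⟩) ⟨hne', hab⟩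
    exact hai₁ this.1
  rcases hi.1 with hiF | hiH <;> rcases hj.1 with hjF | hjH
  · exact pair_face F hF.1 i hiF j hjF
  · by_cases hiH : i ∈ H
    · exact pair_face H hH.1 i hiH j hjH
    · by_cases hjF : j ∈ F
      · exact pair_face F hF.1 i hiF j hjF
      · exact key i j hiF hiH hi.2.1 hjH hjF
  · by_cases hiF : i ∈ F
    · exact pair_face F hF.1 i hiF j hjF
    · by_cases hjH : j ∈ H
      · exact pair_face H hH.1 i hiH j hjH
      · rw [pair_comm]; exact key j i hjF hjH hj.2.1 hiH hiF
  · exact pair_face H hH.1 i hiH j hjH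
end
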